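/- arXiv:1909.02987 — 10 statements merged into one kernel-verified Lean document; each statement's English description precedes it below -/
import Mathlib

section
/- If {T_j}_{j∈J} is a family of bounded operators on a Hilbert space H with closed range such that A‖f‖² ≤ Σ_j ‖T_j f‖² ≤ B‖f‖² for all f ∈ H (with A, B > 0), and for each j the set {T_j g_{jk} : k ∈ K} is a frame for the subspace T_j(H) with uniform frame bounds α, β, then {T_j* T_j g_{jk} : j ∈ J, k ∈ K} is a frame for H with frame bounds αA and βB. -/
open scoped RealInnerProductSpace

theorem stmt0 {H : Type*} [NormedAddCommGroup H] [InnerProductSpace ℝ H] [CompleteSpace H]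
    {J K : Type*} [Countable J] [Countable K]
    (T : J → H →L[ℝ] H) (hrange : ∀ j, IsClosed (Set.range (T j)))
    (g : J → K → H) (A B α β : ℝ) (hA : 0 < A) (hB : 0 < B) (hα : 0 < α) (hβ : 0 < β)
    (hfusion : ∀ f : H, A * ‖f‖ ^ 2 ≤ ∑' j, ‖T j f‖ ^ 2 ∧ ∑' j, ‖T j f‖ ^ 2 ≤ B * ‖f‖ ^ 2)
    (hlocal : ∀ j, ∀ f ∈ Set.range (T j),
      α * ‖f‖ ^ 2 ≤ ∑' k, ⟪f, T j (g j k)⟫ ^ 2 ∧ ∑' k, ⟪f, T j (g j k)⟫ ^ 2 ≤ β * ‖f‖ ^ 2) :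
    ∀ f : H,
      α * A * ‖f‖ ^ 2 ≤ ∑' p : J × K, ⟪f, (T p.1).adjoint (T p.1 (g p.1 p.2))⟫ ^ 2 ∧
      ∑' p : J × K, ⟪f, (T p.1).adjoint (T p.1 (g p.1 p.2))⟫ ^ 2 ≤ β * B * ‖f‖ ^ 2 := by
  intro f
  have hterm : ∀ p : J × K, ⟪f, (T p.1).adjoint (T p.1 (g p.1 p.2))⟫ =
      ⟪T p.1 f, T p.1 (g p.1 p.2)⟫ := fun p =>
    ContinuousLinearMap.adjoint_inner_right _ _ _
  simp only [hterm]
  -- fiber summability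
  have hfib : ∀ j, Summable fun k => ⟪T j f, T j (g j k)⟫ ^ 2 := by
    intro j
    by_contra h
    have h0 : ∑' k, ⟪T j f, T j (g j k)⟫ ^ 2 = 0 := tsum_eq_zero_of_not_summable h
    have h1 := (hlocal j (T j f) ⟨f, rfl⟩).1
    rw [h0] at h1
    have h2 : ‖T j f‖ ^ 2 ≤ 0 := by
      by_contra hc
      push_neg at hc
      nlinarith [mul_pos hα hc]
    have h3 : ‖T j f‖ ^ 2 = 0 := le_antisymm h2 (sq_nonneg _)
    have hz : T j f = 0 := by
      rwa [pow_eq_zero_iff two_ne_zero, norm_eq_zero] at h3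
    apply h
    have he : (fun k => ⟪T j f, T j (g j k)⟫ ^ 2) = fun _ => (0 : ℝ) := by
      funext k; rw [hz, inner_zero_left]; ring
    rw [he]; exact summable_zero
  have hTs : Summable fun j => ‖T j f‖ ^ 2 := by
    by_contra h
    have h0 : ∑' j, ‖T j f‖ ^ 2 = 0 := tsum_eq_zero_of_not_summable h
    have h1 := (hfusion f).1
    rw [h0] at h1
    have h2 : ‖f‖ ^ 2 ≤ 0 := by
      by_contra hc
      push_neg at hc
      nlinarith [mul_pos hA hc]
    have h3 : ‖f‖ ^ 2 = 0 := le_antisymm h2 (sq_nonneg _)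
    have hf : f = 0 := by
      rwa [pow_eq_zero_iff two_ne_zero, norm_eq_zero] at h3
    apply h
    have he : (fun j => ‖T j f‖ ^ 2) = fun _ => (0 : ℝ) := by
      funext j; rw [hf, map_zero, norm_zero]; ring
    rw [he]; exact summable_zero
  have hub : ∀ j, ∑' k, ⟪T j f, T j (g j k)⟫ ^ 2 ≤ β * ‖T j f‖ ^ 2 :=
    fun j => (hlocal j (T j f) ⟨f, rfl⟩).2
  have hlb : ∀ j, α * ‖T j f‖ ^ 2 ≤ ∑' k, ⟪T j f, T j (g j k)⟫ ^ 2 :=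
    fun j => (hlocal j (T j f) ⟨f, rfl⟩).1
  have hsumF : Summable fun j => ∑' k, ⟪T j f, T j (g j k)⟫ ^ 2 :=
    Summable.of_nonneg_of_le (fun j => tsum_nonneg fun k => sq_nonneg _) hub (hTs.mul_left β)
  have hprod : Summable (fun p : J × K => ⟪T p.1 f, T p.1 (g p.1 p.2)⟫ ^ 2) :=
    (summable_prod_of_nonneg (fun p => sq_nonneg _)).mpr ⟨hfib, hsumF⟩
  have heq : ∑' p : J × K, ⟪T p.1 f, T p.1 (g p.1 p.2)⟫ ^ 2 =
      ∑' j, ∑' k, ⟪T j f, T j (g j k)⟫ ^ 2 := Summable.tsum_prod' hprod hfib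
  rw [heq]
  constructor
  · calc α * A * ‖f‖ ^ 2 = α * (A * ‖f‖ ^ 2) := by ring
    _ ≤ α * ∑' j, ‖T j f‖ ^ 2 := by
        exact mul_le_mul_of_nonneg_left (hfusion f).1 hα.le
    _ = ∑' j, α * ‖T j f‖ ^ 2 := (tsum_mul_left).symm
    _ ≤ ∑' j, ∑' k, ⟪T j f, T j (g j k)⟫ ^ 2 := Summable.tsum_le_tsum hlb (hTs.mul_left α) hsumF
  · calc ∑' j, ∑' k, ⟪T j f, T j (g j k)⟫ ^ 2 ≤ ∑' j, β * ‖T j f‖ ^ 2 :=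
        Summable.tsum_le_tsum hub hsumF (hTs.mul_left β)
    _ = β * ∑' j, ‖T j f‖ ^ 2 := tsum_mul_left
    _ ≤ β * (B * ‖f‖ ^ 2) := mul_le_mul_of_nonneg_left (hfusion f).2 hβ.le
    _ = β * B * ‖f‖ ^ 2 := by ring
end

section
/- Suppose for each j ∈ J the set {T_j g_{jk} : k ∈ K} is a frame for T_j(H) with uniform frame bounds α, β, and {T_j* T_j g_{jk} : j ∈ J, k ∈ K} is a frame for H with frame bounds αA and βB. Then (α/β)A ‖f‖² ≤ Σ_j ‖T_j f‖² ≤ (β/α)B ‖f‖² for all f ∈ H. -/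
open scoped RealInnerProductSpace

theorem stmt1 {H : Type*} [NormedAddCommGroup H] [InnerProductSpace ℝ H] [CompleteSpace H]
    {J K : Type*} [Countable J] [Countable K]
    (T : J → H →L[ℝ] H) (hrange : ∀ j, IsClosed (Set.range (T j)))
    (g : J → K → H) (A B α β : ℝ) (hA : 0 < A) (hB : 0 < B) (hα : 0 < α) (hβ : 0 < β)
    (hlocal : ∀ j, ∀ f ∈ Set.range (T j),
      α * ‖f‖ ^ 2 ≤ ∑' k, ⟪f, T j (g j k)⟫ ^ 2 ∧ ∑' k, ⟪f, T j (g j k)⟫ ^ 2 ≤ β * ‖f‖ ^ 2)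
    (hglobal : ∀ f : H,
      α * A * ‖f‖ ^ 2 ≤ ∑' p : J × K, ⟪f, (T p.1).adjoint (T p.1 (g p.1 p.2))⟫ ^ 2 ∧
      ∑' p : J × K, ⟪f, (T p.1).adjoint (T p.1 (g p.1 p.2))⟫ ^ 2 ≤ β * B * ‖f‖ ^ 2) :
    ∀ f : H,
      (α / β) * A * ‖f‖ ^ 2 ≤ ∑' j, ‖T j f‖ ^ 2 ∧
      ∑' j, ‖T j f‖ ^ 2 ≤ (β / α) * B * ‖f‖ ^ 2 := by
  intro f
  by_cases hf : f = 0
  · simp [hf]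
  have hfn : 0 < ‖f‖ ^ 2 := pow_pos (norm_pos_iff.mpr hf) 2
  set F : J × K → ℝ := fun p => ⟪f, (T p.1).adjoint (T p.1 (g p.1 p.2))⟫ ^ 2 with hFdef
  have hFeq : ∀ p : J × K, F p = ⟪T p.1 f, T p.1 (g p.1 p.2)⟫ ^ 2 := by
    intro p
    simp [hFdef, ContinuousLinearMap.adjoint_inner_right]
  have hFnn : ∀ p, 0 ≤ F p := fun p => sq_nonneg _
  have hglob := hglobal f
  -- summability of F
  have hsumF : Summable F := by
    by_contra hns
    have h0 : ∑' p, F p = 0 := tsum_eq_zero_of_not_summable hns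
    have := hglob.1
    rw [h0] at this
    nlinarith [mul_pos (mul_pos hα hA) hfn]
  set s : J → ℝ := fun j => ∑' k, F (j, k) with hsdef
  have hsk : ∀ j, Summable fun k => F (j, k) := fun j => hsumF.prod_factor j
  have hss : HasSum s (∑' p, F p) :=
    HasSum.prod_fiberwise hsumF.hasSum (fun j => (hsk j).hasSum)
  have hsSummable : Summable s := ⟨_, hss⟩
  have hsval : ∑' j, s j = ∑' p, F p := hss.tsum_eq
  -- local bounds on each s j
  have hloc : ∀ j, α * ‖T j f‖ ^ 2 ≤ s j ∧ s j ≤ β * ‖T j f‖ ^ 2 := by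
    intro j
    have h := hlocal j (T j f) ⟨f, rfl⟩
    have heq : s j = ∑' k, ⟪T j f, T j (g j k)⟫ ^ 2 := by
      simp only [hsdef]
      exact tsum_congr fun k => hFeq (j, k)
    rw [heq]; exact h
  have hnormsum : Summable fun j => ‖T j f‖ ^ 2 := by
    apply Summable.of_nonneg_of_le (fun j => by positivity)
      (fun j => ?_) (hsSummable.mul_left α⁻¹)
    have := (hloc j).1
    rw [le_inv_mul_iff₀ hα]
    linarith
  have hαsum : α * ∑' j, ‖T j f‖ ^ 2 ≤ ∑' j, s j := by
    rw [← tsum_mul_left]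
    exact Summable.tsum_le_tsum (fun j => (hloc j).1) (hnormsum.mul_left α) hsSummable
  have hβsum : ∑' j, s j ≤ β * ∑' j, ‖T j f‖ ^ 2 := by
    rw [← tsum_mul_left]
    exact Summable.tsum_le_tsum (fun j => (hloc j).2) hsSummable (hnormsum.mul_left β)
  constructor
  · have h1 := hglob.1
    rw [← hsval] at h1
    rw [div_mul_eq_mul_div, div_mul_eq_mul_div, div_le_iff₀ hβ]
    nlinarith
  · have h2 := hglob.2
    rw [← hsval] at h2
    rw [div_mul_eq_mul_div, div_mul_eq_mul_div, le_div_iff₀ hα]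
    nlinarith
end

section
/- If {P_j}_{j∈J} are orthogonal projections forming a fusion frame with bounds A, B, and for each j the set {P_j g_{jk} : k ∈ K} is a frame for P_j(H) with uniform frame bounds α, β, then {P_j g_{jk} : j ∈ J, k ∈ K} is a frame for H with frame bounds αA and βB. -/
open scoped RealInnerProductSpace

theorem stmt2 {H : Type*} [NormedAddCommGroup H] [InnerProductSpace ℝ H] [CompleteSpace H]
    {J K : Type*} [Countable J] [Countable K]
    (P : J → H →L[ℝ] H) (hsa : ∀ j, IsSelfAdjoint (P j)) (hidem : ∀ j, IsIdempotentElem (P j))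
    (g : J → K → H) (A B α β : ℝ) (hA : 0 < A) (hB : 0 < B) (hα : 0 < α) (hβ : 0 < β)
    (hfusion : ∀ f : H, A * ‖f‖ ^ 2 ≤ ∑' j, ‖P j f‖ ^ 2 ∧ ∑' j, ‖P j f‖ ^ 2 ≤ B * ‖f‖ ^ 2)
    (hlocal : ∀ j, ∀ f ∈ Set.range (P j),
      α * ‖f‖ ^ 2 ≤ ∑' k, ⟪f, P j (g j k)⟫ ^ 2 ∧ ∑' k, ⟪f, P j (g j k)⟫ ^ 2 ≤ β * ‖f‖ ^ 2) :
    ∀ f : H,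
      α * A * ‖f‖ ^ 2 ≤ ∑' p : J × K, ⟪f, P p.1 (g p.1 p.2)⟫ ^ 2 ∧
      ∑' p : J × K, ⟪f, P p.1 (g p.1 p.2)⟫ ^ 2 ≤ β * B * ‖f‖ ^ 2 := by
  intro f
  have hidem' : ∀ j (x : H), P j (P j x) = P j x := by
    intro j x
    have h := hidem j
    rw [IsIdempotentElem] at h
    calc P j (P j x) = (P j * P j) x := rfl
      _ = P j x := by rw [h]
  have hkey : ∀ j x, ⟪f, P j x⟫ = ⟪P j f, P j x⟫ := by
    intro j x
    have hs := (ContinuousLinearMap.isSelfAdjoint_iff_isSymmetric.mp (hsa j))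
    calc ⟪f, P j x⟫ = ⟪f, P j (P j x)⟫ := by rw [hidem']
      _ = ⟪P j f, P j x⟫ := (hs f (P j x)).symm
  have hlocalj : ∀ j, α * ‖P j f‖ ^ 2 ≤ ∑' k, ⟪f, P j (g j k)⟫ ^ 2 ∧
      ∑' k, ⟪f, P j (g j k)⟫ ^ 2 ≤ β * ‖P j f‖ ^ 2 := by
    intro j
    have := hlocal j (P j f) ⟨f, rfl⟩
    simpa only [← hkey] using this
  have hsumk : ∀ j, Summable (fun k => ⟪f, P j (g j k)⟫ ^ 2) := by
    intro j
    by_contra h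
    have h0 : ∑' k, ⟪f, P j (g j k)⟫ ^ 2 = 0 := tsum_eq_zero_of_not_summable h
    have h1 := (hlocalj j).1
    rw [h0] at h1
    have h2 : ‖P j f‖ ^ 2 = 0 := le_antisymm (by nlinarith) (sq_nonneg _)
    have h3 : P j f = 0 := by
      rw [pow_eq_zero_iff (by norm_num), norm_eq_zero] at h2
      exact h2
    apply h
    have : (fun k => ⟪f, P j (g j k)⟫ ^ 2) = fun _ => 0 := by
      funext k
      rw [hkey, h3]
      simp
    rw [this]
    exact summable_zero
  have hnormsum : Summable (fun j => ‖P j f‖ ^ 2) := by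
    by_contra h
    have h0 : ∑' j, ‖P j f‖ ^ 2 = 0 := tsum_eq_zero_of_not_summable h
    have h1 := (hfusion f).1
    rw [h0] at h1
    have h2 : f = 0 := by
      have : ‖f‖ ^ 2 = 0 := le_antisymm (by nlinarith) (sq_nonneg _)
      rw [pow_eq_zero_iff (by norm_num), norm_eq_zero] at this
      exact this
    apply h
    have : (fun j => ‖P j f‖ ^ 2) = fun _ => 0 := by
      funext j; rw [h2]; simp
    rw [this]
    exact summable_zero
  have hsumj : Summable (fun j => ∑' k, ⟪f, P j (g j k)⟫ ^ 2) :=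
    Summable.of_nonneg_of_le (fun j => tsum_nonneg fun k => sq_nonneg _)
      (fun j => (hlocalj j).2) (hnormsum.mul_left β)
  have hsumF : Summable (fun p : J × K => ⟪f, P p.1 (g p.1 p.2)⟫ ^ 2) :=
    (summable_prod_of_nonneg (fun p => sq_nonneg _)).mpr ⟨hsumk, hsumj⟩
  have hprod : ∑' p : J × K, ⟪f, P p.1 (g p.1 p.2)⟫ ^ 2
      = ∑' j, ∑' k, ⟪f, P j (g j k)⟫ ^ 2 := Summable.tsum_prod' hsumF hsumk
  constructor
  · calc α * A * ‖f‖ ^ 2 = α * (A * ‖f‖ ^ 2) := mul_assoc _ _ _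
      _ ≤ α * ∑' j, ‖P j f‖ ^ 2 := by
          exact mul_le_mul_of_nonneg_left (hfusion f).1 hα.le
      _ = ∑' j, α * ‖P j f‖ ^ 2 := tsum_mul_left.symm
      _ ≤ ∑' j, ∑' k, ⟪f, P j (g j k)⟫ ^ 2 :=
          Summable.tsum_le_tsum (fun j => (hlocalj j).1) (hnormsum.mul_left α) hsumj
      _ = ∑' p : J × K, ⟪f, P p.1 (g p.1 p.2)⟫ ^ 2 := hprod.symm
  · calc ∑' p : J × K, ⟪f, P p.1 (g p.1 p.2)⟫ ^ 2
        = ∑' j, ∑' k, ⟪f, P j (g j k)⟫ ^ 2 := hprod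
      _ ≤ ∑' j, β * ‖P j f‖ ^ 2 :=
          Summable.tsum_le_tsum (fun j => (hlocalj j).2) hsumj (hnormsum.mul_left β)
      _ = β * ∑' j, ‖P j f‖ ^ 2 := tsum_mul_left
      _ ≤ β * (B * ‖f‖ ^ 2) := mul_le_mul_of_nonneg_left (hfusion f).2 hβ.le
      _ = β * B * ‖f‖ ^ 2 := (mul_assoc _ _ _).symm
end

section
/- If {P_j g_{jk} : k ∈ K} is a frame for P_j(H) with uniform frame bounds α, β for each j, and {P_j g_{jk} : j ∈ J, k ∈ K} is a frame for H with frame bounds αA and βB, then {P_j}_{j∈J} is a fusion frame with bounds (α/β)A and (β/α)B. -/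
open scoped RealInnerProductSpace

theorem stmt3 {H : Type*} [NormedAddCommGroup H] [InnerProductSpace ℝ H] [CompleteSpace H]
    {J K : Type*} [Countable J] [Countable K]
    (P : J → H →L[ℝ] H) (hsa : ∀ j, IsSelfAdjoint (P j)) (hidem : ∀ j, IsIdempotentElem (P j))
    (g : J → K → H) (A B α β : ℝ) (hA : 0 < A) (hB : 0 < B) (hα : 0 < α) (hβ : 0 < β)
    (hlocal : ∀ j, ∀ f ∈ Set.range (P j),
      α * ‖f‖ ^ 2 ≤ ∑' k, ⟪f, P j (g j k)⟫ ^ 2 ∧ ∑' k, ⟪f, P j (g j k)⟫ ^ 2 ≤ β * ‖f‖ ^ 2)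
    (hglobal : ∀ f : H,
      α * A * ‖f‖ ^ 2 ≤ ∑' p : J × K, ⟪f, P p.1 (g p.1 p.2)⟫ ^ 2 ∧
      ∑' p : J × K, ⟪f, P p.1 (g p.1 p.2)⟫ ^ 2 ≤ β * B * ‖f‖ ^ 2) :
    ∀ f : H,
      (α / β) * A * ‖f‖ ^ 2 ≤ ∑' j, ‖P j f‖ ^ 2 ∧
      ∑' j, ‖P j f‖ ^ 2 ≤ (β / α) * B * ‖f‖ ^ 2 := by
  intro f
  -- key: ⟪f, P j x⟫ = ⟪P j f, P j x⟫
  have key : ∀ j x, ⟪f, P j x⟫ = ⟪P j f, P j x⟫ := by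
    intro j x
    conv_lhs => rw [← (hidem j)]
    rw [ContinuousLinearMap.mul_apply, ← (hsa j).isSymmetric.apply_clm]
  have hlj : ∀ j, α * ‖P j f‖ ^ 2 ≤ ∑' k, ⟪f, P j (g j k)⟫ ^ 2 ∧
      (∑' k, ⟪f, P j (g j k)⟫ ^ 2) ≤ β * ‖P j f‖ ^ 2 := by
    intro j
    have := hlocal j (P j f) ⟨f, rfl⟩
    simpa only [← key j] using this
  by_cases hsum : Summable fun p : J × K => ⟪f, P p.1 (g p.1 p.2)⟫ ^ 2
  · -- inner summability and sum over j of inner tsums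
    have hinner : ∀ j, Summable fun k => ⟪f, P j (g j k)⟫ ^ 2 := fun j => hsum.prod_factor j
    have houter : Summable fun j => ∑' k, ⟪f, P j (g j k)⟫ ^ 2 := by
      rcases (summable_prod_of_nonneg (fun p => sq_nonneg _)).mp hsum with ⟨_, h2⟩
      exact h2
    have hT : (∑' p : J × K, ⟪f, P p.1 (g p.1 p.2)⟫ ^ 2)
        = ∑' j, ∑' k, ⟪f, P j (g j k)⟫ ^ 2 := Summable.tsum_prod hsum
    have hPsum : Summable fun j => ‖P j f‖ ^ 2 := by
      have : Summable fun j => α * ‖P j f‖ ^ 2 :=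
        houter.of_nonneg_of_le (fun j => by positivity) (fun j => (hlj j).1)
      have := this.div_const α
      simpa [mul_div_assoc, mul_div_cancel_left₀ _ hα.ne'] using this
    have hlow : α * ∑' j, ‖P j f‖ ^ 2 ≤ ∑' j, ∑' k, ⟪f, P j (g j k)⟫ ^ 2 := by
      rw [← tsum_mul_left]
      exact Summable.tsum_le_tsum (fun j => (hlj j).1) (hPsum.mul_left α) houter
    have hhigh : (∑' j, ∑' k, ⟪f, P j (g j k)⟫ ^ 2) ≤ β * ∑' j, ‖P j f‖ ^ 2 := by
      rw [← tsum_mul_left]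
      exact Summable.tsum_le_tsum (fun j => (hlj j).2) houter (hPsum.mul_left β)
    obtain ⟨hg1, hg2⟩ := hglobal f
    rw [hT] at hg1 hg2
    constructor
    · rw [div_mul_eq_mul_div, div_mul_eq_mul_div, div_le_iff₀ hβ]
      calc α * A * ‖f‖ ^ 2 ≤ ∑' j, ∑' k, ⟪f, P j (g j k)⟫ ^ 2 := hg1
        _ ≤ β * ∑' j, ‖P j f‖ ^ 2 := hhigh
        _ = (∑' j, ‖P j f‖ ^ 2) * β := mul_comm _ _
    · rw [div_mul_eq_mul_div, div_mul_eq_mul_div, le_div_iff₀ hα]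
      calc (∑' j, ‖P j f‖ ^ 2) * α = α * ∑' j, ‖P j f‖ ^ 2 := mul_comm _ _
        _ ≤ ∑' j, ∑' k, ⟪f, P j (g j k)⟫ ^ 2 := hlow
        _ ≤ β * B * ‖f‖ ^ 2 := hg2
  · -- not summable: tsum = 0, so from the lower global bound f = 0
    have hz : (∑' p : J × K, ⟪f, P p.1 (g p.1 p.2)⟫ ^ 2) = 0 := tsum_eq_zero_of_not_summable hsum
    have hg1 := (hglobal f).1
    rw [hz] at hg1
    have hf : f = 0 := by
      by_contra hne
      have hfn : 0 < ‖f‖ := norm_pos_iff.mpr hne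
      have : 0 < α * A * ‖f‖ ^ 2 := by positivity
      linarith
    subst hf
    simp
end

section
/- Let {P_j}_{j∈ℕ} be orthogonal projections on a Hilbert space H such that P_j P_k = P_k P_j for all j, k, and P_j P_k = 0 whenever |j−k| ≥ M for some positive integer M. If the family is complete (i.e., P_j f = 0 for all j implies f = 0), then {P_j}_{j∈ℕ} is a fusion frame; in fact ‖f‖² ≤ Σ_j ‖P_j f‖² ≤ M‖f‖² for all f ∈ H. -/
open scoped InnerProductSpace

section aux
variable {H : Type*} [NormedAddCommGroup H] [InnerProductSpace ℝ H] [CompleteSpace H]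

lemma sa_inner {T : H →L[ℝ] H} (hT : IsSelfAdjoint T) (x y : H) :
    ⟪T x, y⟫_ℝ = ⟪x, T y⟫_ℝ := by
  rw [← ContinuousLinearMap.adjoint_inner_left, hT.adjoint_eq]

lemma proj_inner {T : H →L[ℝ] H} (hT : IsSelfAdjoint T) (hT2 : T * T = T) (f : H) :
    ⟪T f, f⟫_ℝ = ‖T f‖ ^ 2 := by
  have h1 : T (T f) = T f := by rw [← ContinuousLinearMap.mul_apply, hT2]
  calc ⟪T f, f⟫_ℝ = ⟪T (T f), f⟫_ℝ := by rw [h1]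
    _ = ⟪T f, T f⟫_ℝ := sa_inner hT (T f) f
    _ = ‖T f‖ ^ 2 := real_inner_self_eq_norm_sq _

lemma proj_norm_le {T : H →L[ℝ] H} (hT : IsSelfAdjoint T) (hT2 : T * T = T) (f : H) :
    ‖T f‖ ≤ ‖f‖ := by
  have h := proj_inner hT hT2 f
  have h2 := real_inner_le_norm (T f) f
  nlinarith [norm_nonneg (T f), norm_nonneg f]

lemma sum_proj_le {ι : Type*} (P : ι → H →L[ℝ] H) (S : Finset ι)
    (hsa : ∀ j ∈ S, IsSelfAdjoint (P j)) (hid : ∀ j ∈ S, P j * P j = P j)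
    (ho : ∀ j ∈ S, ∀ k ∈ S, j ≠ k → P j * P k = 0) (f : H) :
    ∑ j ∈ S, ‖P j f‖ ^ 2 ≤ ‖f‖ ^ 2 := by
  set Q : H →L[ℝ] H := ∑ j ∈ S, P j with hQ
  have hQsa : IsSelfAdjoint Q := by
    unfold IsSelfAdjoint
    rw [hQ, star_sum]
    exact Finset.sum_congr rfl fun j hj => hsa j hj
  have hQ2 : Q * Q = Q := by
    rw [hQ, Finset.sum_mul_sum]
    refine Finset.sum_congr rfl fun j hj => ?_
    exact Finset.sum_eq_single_of_mem j hj (fun k hk hkj => ho j hj k hk (Ne.symm hkj)) ▸ hid j hj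
  have hsum : ∑ j ∈ S, ‖P j f‖ ^ 2 = ⟪Q f, f⟫_ℝ := by
    rw [hQ, ContinuousLinearMap.sum_apply, sum_inner]
    exact Finset.sum_congr rfl fun j hj => (proj_inner (hsa j hj) (hid j hj) f).symm
  rw [hsum, proj_inner hQsa hQ2 f]
  have := proj_norm_le hQsa hQ2 f
  have := norm_nonneg (Q f)
  nlinarith [norm_nonneg f]

end aux

theorem stmt4 {H : Type*} [NormedAddCommGroup H] [InnerProductSpace ℝ H] [CompleteSpace H]
    (P : ℕ → H →L[ℝ] H) (hsa : ∀ j, IsSelfAdjoint (P j)) (hidem : ∀ j, IsIdempotentElem (P j))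
    (hcomm : ∀ j k, (P j) ∘L (P k) = (P k) ∘L (P j))
    (M : ℕ) (hM : 0 < M)
    (horth : ∀ j k : ℕ, (M : ℤ) ≤ |(j : ℤ) - (k : ℤ)| → (P j) ∘L (P k) = 0)
    (hcomplete : ∀ f : H, (∀ j, P j f = 0) → f = 0) :
    ∀ f : H, ‖f‖ ^ 2 ≤ ∑' j, ‖P j f‖ ^ 2 ∧ ∑' j, ‖P j f‖ ^ 2 ≤ (M : ℝ) * ‖f‖ ^ 2 := by
  intro f
  have hcomm' : ∀ j k, Commute (P j) (P k) := fun j k => hcomm j k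
  have hid' : ∀ j, P j * P j = P j := fun j => hidem j
  -- orthogonality within a residue class
  have horth' : ∀ j k : ℕ, j % M = k % M → j ≠ k → P j * P k = 0 := by
    intro j k hmod hne
    apply horth
    have hdvd : (M : ℤ) ∣ (k : ℤ) - (j : ℤ) := (Nat.ModEq.dvd (hmod : j ≡ k [MOD M]))
    have habs : (M : ℤ) ∣ |(j : ℤ) - (k : ℤ)| := by
      rw [abs_sub_comm]
      exact (dvd_abs _ _).mpr hdvd
    refine Int.le_of_dvd ?_ habs
    rw [abs_pos, sub_ne_zero]
    exact_mod_cast hne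
  -- Upper bound: finite sums are bounded by M * ‖f‖²
  have hfin : ∀ F : Finset ℕ, ∑ j ∈ F, ‖P j f‖ ^ 2 ≤ (M : ℝ) * ‖f‖ ^ 2 := by
    intro F
    have hmaps : ∀ j ∈ F, j % M ∈ Finset.range M := fun j _ => Finset.mem_range.mpr (Nat.mod_lt j hM)
    rw [← Finset.sum_fiberwise_of_maps_to hmaps]
    calc ∑ r ∈ Finset.range M, ∑ j ∈ F.filter (fun j => j % M = r), ‖P j f‖ ^ 2
        ≤ ∑ _r ∈ Finset.range M, ‖f‖ ^ 2 := by
          refine Finset.sum_le_sum fun r _ => ?_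
          refine sum_proj_le P _ (fun j _ => hsa j) (fun j _ => hid' j) ?_ f
          intro j hj k hk hne
          rw [Finset.mem_filter] at hj hk
          exact horth' j k (hj.2.trans hk.2.symm) hne
      _ = (M : ℝ) * ‖f‖ ^ 2 := by
          rw [Finset.sum_const, Finset.card_range, nsmul_eq_mul]
  have hnn : ∀ j, 0 ≤ ‖P j f‖ ^ 2 := fun j => sq_nonneg _
  have hsummable : Summable (fun j => ‖P j f‖ ^ 2) :=
    summable_of_sum_range_le hnn (fun n => hfin (Finset.range n))
  have hupper : ∑' j, ‖P j f‖ ^ 2 ≤ (M : ℝ) * ‖f‖ ^ 2 :=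
    Real.tsum_le_of_sum_range_le hnn (fun n => hfin (Finset.range n))
  refine ⟨?_, hupper⟩
  -- The family of products D n = (1 - P 0) ⋯ (1 - P (n-1))
  set D : ℕ → H →L[ℝ] H := fun n => Nat.rec 1 (fun m Dm => Dm * (1 - P m)) n with hD
  have hD0 : D 0 = 1 := rfl
  have hDsucc : ∀ n, D (n + 1) = D n * (1 - P n) := fun n => rfl
  have hC : ∀ j n, Commute (P j) (D n) := by
    intro j n
    induction n with
    | zero => exact Commute.one_right _
    | succ n ih =>
      rw [hDsucc]
      exact ih.mul_right ((Commute.one_right (P j)).sub_right (hcomm' j n))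
  have hq : ∀ n, (1 - P n) * (1 - P n) = 1 - P n := fun n => (hidem n).one_sub
  have hqD : ∀ n, (1 - P n) * D n = D n * (1 - P n) :=
    fun n => (Commute.sub_left (Commute.one_left _) (hC n n)).eq
  have hsaq : ∀ n, IsSelfAdjoint ((1 : H →L[ℝ] H) - P n) := by
    intro n
    show star _ = _
    rw [star_sub, star_one, hsa n]
  have hDsa : ∀ n, IsSelfAdjoint (D n) := by
    intro n
    induction n with
    | zero => show star _ = _; rw [hD0, star_one]
    | succ n ih =>
      rw [hDsucc]
      show star _ = _
      rw [star_mul, star_sub, star_one, hsa n, ih, hqD]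
  have hDid : ∀ n, D n * D n = D n := by
    intro n
    induction n with
    | zero => rw [hD0, one_mul]
    | succ n ih =>
      rw [hDsucc n, mul_assoc, ← mul_assoc (1 - P n), hqD, mul_assoc, hq, ← mul_assoc, ih]
  have hPD0 : ∀ j n, j < n → P j * D n = 0 := by
    intro j n
    induction n with
    | zero => omega
    | succ n ih =>
      intro hjn
      rw [hDsucc n, ← mul_assoc]
      rcases Nat.lt_or_ge j n with h | h
      · rw [ih h, zero_mul]
      · have hj : j = n := by omega
        subst hj
        rw [(hC j j).eq, mul_assoc, mul_sub, mul_one, hid' j, sub_self, mul_zero]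
  have hDabs : ∀ m n, m ≤ n → D m * D n = D n := by
    intro m
    induction m with
    | zero => intro n _; rw [hD0, one_mul]
    | succ m ih =>
      intro n hmn
      rw [hDsucc m, mul_assoc, sub_mul, one_mul, hPD0 m n (by omega), sub_zero, ih n (by omega)]
  -- telescoping operator identity
  have hR : ∀ n, (1 : H →L[ℝ] H) - D n = ∑ j ∈ Finset.range n, (D j * P j) := by
    intro n
    induction n with
    | zero => rw [hD0, Finset.range_zero, Finset.sum_empty, sub_self]
    | succ n ih =>
      rw [Finset.sum_range_succ, ← ih, hDsucc n, mul_sub, mul_one]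
      abel
  -- R j = D j * P j is a self-adjoint idempotent
  have hRsa : ∀ j, IsSelfAdjoint (D j * P j) := by
    intro j
    show star _ = _
    rw [star_mul, hsa j, (hDsa j), (hC j j).eq]
  have hRid : ∀ j, (D j * P j) * (D j * P j) = D j * P j := by
    intro j
    rw [mul_assoc, ← mul_assoc (P j), (hC j j).eq, mul_assoc, hid' j, ← mul_assoc, hDid j]
  -- key identity
  have key : ∀ n, ‖f‖ ^ 2 = ‖D n f‖ ^ 2 + ∑ j ∈ Finset.range n, ‖(D j * P j) f‖ ^ 2 := by
    intro n
    have h2 : f = D n f + ∑ j ∈ Finset.range n, (D j * P j) f := by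
      have h := congrArg (fun (T : H →L[ℝ] H) => T f) (hR n)
      simp only [ContinuousLinearMap.sub_apply, ContinuousLinearMap.one_apply,
        ContinuousLinearMap.sum_apply] at h
      rw [← h]
      abel
    have h2' : ⟪f, f⟫_ℝ = ⟪D n f + ∑ j ∈ Finset.range n, (D j * P j) f, f⟫_ℝ := by
      rw [← h2]
    calc ‖f‖ ^ 2 = ⟪f, f⟫_ℝ := (real_inner_self_eq_norm_sq f).symm
      _ = ⟪D n f, f⟫_ℝ + ∑ j ∈ Finset.range n, ⟪(D j * P j) f, f⟫_ℝ := by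
          rw [h2', inner_add_left, sum_inner]
      _ = ‖D n f‖ ^ 2 + ∑ j ∈ Finset.range n, ‖(D j * P j) f‖ ^ 2 := by
          rw [proj_inner (hDsa n) (hDid n) f]
          congr 1
          exact Finset.sum_congr rfl fun j _ => proj_inner (hRsa j) (hRid j) f
  have hRle : ∀ j, ‖(D j * P j) f‖ ^ 2 ≤ ‖P j f‖ ^ 2 := by
    intro j
    have h1 : (D j * P j) f = D j (P j f) := rfl
    rw [h1]
    exact pow_le_pow_left₀ (norm_nonneg _) (proj_norm_le (hDsa j) (hDid j) (P j f)) 2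
  -- convergence of a n = ‖D n f‖² to 0
  set a : ℕ → ℝ := fun n => ‖D n f‖ ^ 2 with ha
  have hanti : Antitone a := by
    refine antitone_nat_of_succ_le fun n => ?_
    have h1 : D (n + 1) f = (1 - P n) (D n f) := by
      rw [hDsucc n, ← hqD]; rfl
    show ‖D (n+1) f‖ ^ 2 ≤ ‖D n f‖ ^ 2
    rw [h1]
    exact pow_le_pow_left₀ (norm_nonneg _) (proj_norm_le (hsaq n) (hq n) (D n f)) 2
  have hanonneg : ∀ n, 0 ≤ a n := fun n => sq_nonneg _
  have hbdd : BddBelow (Set.range a) := ⟨0, by rintro x ⟨n, rfl⟩; exact hanonneg n⟩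
  set L : ℝ := ⨅ n, a n with hLdef
  have hconvA : Filter.Tendsto a Filter.atTop (nhds L) := tendsto_atTop_ciInf hanti hbdd
  have hLle : ∀ n, L ≤ a n := fun n => ciInf_le hbdd n
  have hdist : ∀ m n, m ≤ n → ‖D n f - D m f‖ ^ 2 = a m - a n := by
    intro m n hmn
    have h1 : ⟪D n f, D m f⟫_ℝ = a n := by
      calc ⟪D n f, D m f⟫_ℝ = ⟪D m (D n f), f⟫_ℝ := (sa_inner (hDsa m) (D n f) f).symm
        _ = ⟪(D m * D n) f, f⟫_ℝ := rfl
        _ = ⟪D n f, f⟫_ℝ := by rw [hDabs m n hmn]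
        _ = a n := proj_inner (hDsa n) (hDid n) f
    have h2 := norm_sub_sq_real (D n f) (D m f)
    rw [h1] at h2
    have h3 : ‖D n f‖ ^ 2 = a n := rfl
    have h4 : ‖D m f‖ ^ 2 = a m := rfl
    rw [h3, h4] at h2
    linarith
  have hCauchy : CauchySeq (fun n => D n f) := by
    refine cauchySeq_of_le_tendsto_0 (fun N => Real.sqrt (a N - L)) ?_ ?_
    · intro n m N hn hm
      wlog hmn : m ≤ n generalizing m n
      · rw [dist_comm]
        exact this m n hm hn (by omega)
      rw [dist_eq_norm]
      rw [show ‖D n f - D m f‖ = Real.sqrt (‖D n f - D m f‖ ^ 2) by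
        rw [Real.sqrt_sq (norm_nonneg _)]]
      apply Real.sqrt_le_sqrt
      rw [hdist m n hmn]
      have := hanti hm
      have := hLle n
      linarith
    · have h0 : Filter.Tendsto (fun N => a N - L) Filter.atTop (nhds 0) := by
        simpa using hconvA.sub (tendsto_const_nhds (x := L))
      have := h0.sqrt
      simpa using this
  obtain ⟨g, hg⟩ := cauchySeq_tendsto_of_complete hCauchy
  have hgzero : g = 0 := by
    apply hcomplete
    intro j
    have h1 : Filter.Tendsto (fun n => P j (D n f)) Filter.atTop (nhds (P j g)) :=
      ((P j).continuous.tendsto g).comp hg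
    have h2 : ∀ n, j < n → P j (D n f) = 0 := by
      intro n hn
      have : P j (D n f) = (P j * D n) f := rfl
      rw [this, hPD0 j n hn, ContinuousLinearMap.zero_apply]
    have h3 : Filter.Tendsto (fun n => P j (D n f)) Filter.atTop (nhds 0) := by
      apply Filter.Tendsto.congr' _ (tendsto_const_nhds (x := (0 : H)))
      filter_upwards [Filter.eventually_gt_atTop j] with n hn
      exact (h2 n hn).symm
    exact tendsto_nhds_unique h1 h3
  rw [hgzero] at hg
  have hA0 : Filter.Tendsto a Filter.atTop (nhds 0) := by
    have := (hg.norm.pow 2)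
    simpa using this
  -- conclude the lower bound
  have hle : ∀ n, ‖f‖ ^ 2 ≤ a n + ∑' j, ‖P j f‖ ^ 2 := by
    intro n
    have h1 : ∑ j ∈ Finset.range n, ‖(D j * P j) f‖ ^ 2 ≤ ∑' j, ‖P j f‖ ^ 2 := by
      calc ∑ j ∈ Finset.range n, ‖(D j * P j) f‖ ^ 2 ≤ ∑ j ∈ Finset.range n, ‖P j f‖ ^ 2 :=
            Finset.sum_le_sum fun j _ => hRle j
        _ ≤ ∑' j, ‖P j f‖ ^ 2 := Summable.sum_le_tsum _ (fun j _ => hnn j) hsummable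
    have hkey := key n
    have h3 : a n = ‖D n f‖ ^ 2 := rfl
    linarith
  have hfinal : Filter.Tendsto (fun n => a n + ∑' j, ‖P j f‖ ^ 2) Filter.atTop
      (nhds (0 + ∑' j, ‖P j f‖ ^ 2)) := hA0.add tendsto_const_nhds
  rw [zero_add] at hfinal
  exact ge_of_tendsto' hfinal hle
end

section
/- Let {P_j}_{j∈ℕ} be commuting orthogonal projections with P_j P_k = 0 for |j−k| ≥ M. Define Q_1 = P_1 and inductively Q_n = P_n − P_n Σ_{k<n} Q_k. Then each Q_n is an orthogonal projection and Q_j Q_k = 0 for j ≠ k. -/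
theorem stmt5 {H : Type*} [NormedAddCommGroup H] [InnerProductSpace ℝ H] [CompleteSpace H]
    (P : ℕ → H →L[ℝ] H) (hsa : ∀ j, IsSelfAdjoint (P j)) (hidem : ∀ j, IsIdempotentElem (P j))
    (hcomm : ∀ j k, (P j) ∘L (P k) = (P k) ∘L (P j))
    (M : ℕ) (hM : 0 < M)
    (horth : ∀ j k : ℕ, (M : ℤ) ≤ |(j : ℤ) - (k : ℤ)| → (P j) ∘L (P k) = 0)
    (Q : ℕ → H →L[ℝ] H)
    (hQ : ∀ n, Q n = P n - (P n) ∘L (∑ k ∈ Finset.range n, Q k)) :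
    (∀ n, IsSelfAdjoint (Q n) ∧ IsIdempotentElem (Q n)) ∧
    (∀ j k, j ≠ k → (Q j) ∘L (Q k) = 0) := by
  set S : ℕ → H →L[ℝ] H := fun n => ∑ k ∈ Finset.range n, Q k with hS
  have hQ' : ∀ n, Q n = P n - P n * S n := hQ
  have hPc : ∀ j k, P j * P k = P k * P j := hcomm
  -- every Q n commutes with every P j
  have hPQ : ∀ n j, P j * Q n = Q n * P j := by
    intro n
    induction n using Nat.strong_induction_on with
    | _ n ih =>
      intro j
      have hPS : P j * S n = S n * P j := by
        rw [hS]
        simp only [Finset.mul_sum, Finset.sum_mul]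
        exact Finset.sum_congr rfl fun k hk => ih k (Finset.mem_range.mp hk) j
      rw [hQ' n, mul_sub, sub_mul, hPc j n, ← mul_assoc, hPc j n, mul_assoc, hPS, ← mul_assoc]
  -- every Q n commutes with every Q m
  have hQQ : ∀ m n, Q n * Q m = Q m * Q n := by
    intro m
    induction m using Nat.strong_induction_on with
    | _ m ih =>
      intro n
      have hQS : Q n * S m = S m * Q n := by
        rw [hS]
        simp only [Finset.mul_sum, Finset.sum_mul]
        exact Finset.sum_congr rfl fun k hk => ih k (Finset.mem_range.mp hk) n
      have h2 : Q n * (P m * S m) = P m * (S m * Q n) := by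
        rw [← mul_assoc, ← hPQ n m, mul_assoc, hQS]
      rw [hQ' m, mul_sub, sub_mul, ← hPQ n m, h2, mul_assoc]
  have key : ∀ n, IsSelfAdjoint (Q n) ∧ Q n * Q n = Q n ∧ ∀ j < n, Q j * Q n = 0 := by
    intro n
    induction n using Nat.strong_induction_on with
    | _ n ih =>
      have hQSe : ∀ i, i < n → Q i * S n = Q i := by
        intro i hi
        rw [hS]
        simp only [Finset.mul_sum]
        rw [Finset.sum_eq_single i]
        · exact (ih i hi).2.1
        · intro j hj hne
          rcases lt_or_gt_of_ne hne with h | h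
          · rw [hQQ j i]
            exact (ih i hi).2.2 j h
          · exact (ih j (Finset.mem_range.mp hj)).2.2 i h
        · intro h; exact absurd (Finset.mem_range.mpr hi) h
      have hSidem : S n * S n = S n := by
        conv_lhs => rw [hS]
        rw [Finset.sum_mul]
        conv_rhs => rw [hS]
        exact Finset.sum_congr rfl fun i hi => hQSe i (Finset.mem_range.mp hi)
      have hSsa : IsSelfAdjoint (S n) := by
        rw [hS, IsSelfAdjoint, star_sum]
        exact Finset.sum_congr rfl fun i hi => (ih i (Finset.mem_range.mp hi)).1
      have hPS : P n * S n = S n * P n := by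
        rw [hS]
        simp only [Finset.mul_sum, Finset.sum_mul]
        exact Finset.sum_congr rfl fun k hk => hPQ k n
      refine ⟨?_, ?_, ?_⟩
      · rw [hQ' n, IsSelfAdjoint, star_sub, star_mul, (hsa n).star_eq, hSsa.star_eq, ← hPS]
      · have hQeq : Q n = P n * (1 - S n) := by rw [hQ' n, mul_one_sub]
        have hTT : (1 - S n) * (1 - S n) = 1 - S n := by
          rw [one_sub_mul, mul_one_sub, hSidem]; abel
        have hT : P n * (1 - S n) = (1 - S n) * P n := by
          rw [mul_one_sub, one_sub_mul, hPS]
        calc Q n * Q n = P n * ((1 - S n) * P n) * (1 - S n) := by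
              rw [hQeq, mul_assoc, mul_assoc, mul_assoc]
          _ = (P n * P n) * ((1 - S n) * (1 - S n)) := by
              rw [← hT]; rw [← mul_assoc, ← mul_assoc, mul_assoc (P n * P n)]
          _ = Q n := by rw [(hidem n).eq, hTT, hQeq]
      · intro j hj
        have hSQ : S n * Q j = Q j := by
          rw [hS] at hQSe ⊢
          calc (∑ k ∈ Finset.range n, Q k) * Q j
              = Q j * ∑ k ∈ Finset.range n, Q k := by
                simp only [Finset.mul_sum, Finset.sum_mul]
                exact Finset.sum_congr rfl fun k hk => hQQ j k
            _ = Q j := hQSe j hj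
        rw [hQQ n j, hQ' n, sub_mul, mul_assoc, hSQ, sub_self]
  refine ⟨fun n => ⟨(key n).1, (key n).2.1⟩, ?_⟩
  intro j k hjk
  rcases lt_or_gt_of_ne hjk with h | h
  · exact (key k).2.2 j h
  · show Q j * Q k = 0
    rw [hQQ k j]
    exact (key j).2.2 k h
end

section
/- Let {P_j}_{j∈ℕ} be commuting orthogonal projections with P_j P_k = 0 for |j−k| ≥ M, and define Q_1 = P_1, Q_n = P_n − P_n Σ_{k<n} Q_k. Then for every f ∈ H and every n, Σ_{j≤n} ‖Q_j f‖² ≤ Σ_{j≤n} ‖P_j f‖². -/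
open scoped RealInnerProductSpace

theorem stmt6 {H : Type*} [NormedAddCommGroup H] [InnerProductSpace ℝ H] [CompleteSpace H]
    (P : ℕ → H →L[ℝ] H) (hsa : ∀ j, IsSelfAdjoint (P j)) (hidem : ∀ j, IsIdempotentElem (P j))
    (hcomm : ∀ j k, (P j) ∘L (P k) = (P k) ∘L (P j))
    (M : ℕ) (hM : 0 < M)
    (horth : ∀ j k : ℕ, (M : ℤ) ≤ |(j : ℤ) - (k : ℤ)| → (P j) ∘L (P k) = 0)
    (Q : ℕ → H →L[ℝ] H)
    (hQ : ∀ n, Q n = P n - (P n) ∘L (∑ k ∈ Finset.range n, Q k)) :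
    ∀ (f : H) (n : ℕ),
      ∑ j ∈ Finset.range (n + 1), ‖Q j f‖ ^ 2 ≤ ∑ j ∈ Finset.range (n + 1), ‖P j f‖ ^ 2 := by
  have hQ' : ∀ n, Q n = P n - P n * (∑ k ∈ Finset.range n, Q k) := hQ
  have hcomm' : ∀ j k, P j * P k = P k * P j := hcomm
  have hidem' : ∀ j, P j * P j = P j := hidem
  -- key structural facts about the Q's
  have key : ∀ n, IsSelfAdjoint (Q n) ∧ Q n * Q n = Q n ∧
      (∀ j, P j * Q n = Q n * P j) ∧ (∀ m, m < n → Q n * Q m = 0 ∧ Q m * Q n = 0) := by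
    intro n
    induction n using Nat.strong_induction_on with
    | _ n ih =>
      set S : H →L[ℝ] H := ∑ k ∈ Finset.range n, Q k with hS
      have Ssa : IsSelfAdjoint S := by
        show star S = S
        rw [hS, star_sum]
        exact Finset.sum_congr rfl fun k hk => (ih k (Finset.mem_range.1 hk)).1.star_eq
      have Scomm : ∀ j, P j * S = S * P j := by
        intro j
        rw [hS, Finset.mul_sum, Finset.sum_mul]
        exact Finset.sum_congr rfl fun k hk => (ih k (Finset.mem_range.1 hk)).2.2.1 j
      have SQ : ∀ k, k < n → S * Q k = Q k := by
        intro k hk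
        rw [hS, Finset.sum_mul]
        rw [Finset.sum_eq_single k]
        · exact (ih k hk).2.1
        · intro j hj hjk
          rcases lt_or_gt_of_ne hjk with h | h
          · exact ((ih k hk).2.2.2 j h).2
          · exact ((ih j (Finset.mem_range.1 hj)).2.2.2 k h).1
        · intro h
          exact absurd (Finset.mem_range.2 hk) h
      have hQn : Q n = P n - P n * S := hQ' n
      have QnS : Q n * S = 0 := by
        rw [hS, Finset.mul_sum]
        apply Finset.sum_eq_zero
        intro k hk
        have hk' := Finset.mem_range.1 hk
        rw [hQn, sub_mul, mul_assoc, SQ k hk', sub_self]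
      have sub' : P n * Q n = Q n := by
        rw [hQn, mul_sub, ← mul_assoc, hidem' n]
      have comm : ∀ j, P j * Q n = Q n * P j := by
        intro j
        rw [hQn, mul_sub, sub_mul, hcomm' j n, ← mul_assoc, hcomm' j n, mul_assoc,
          Scomm j, ← mul_assoc]
      have sa : IsSelfAdjoint (Q n) := by
        rw [hQn]
        have : IsSelfAdjoint (P n * S) := by
          rw [IsSelfAdjoint]
          rw [star_mul, (hsa n).star_eq, Ssa.star_eq, ← Scomm n]
        exact (hsa n).sub this
      have idem : Q n * Q n = Q n := by
        have h1 : Q n * P n = Q n := by rw [← comm n, sub']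
        calc Q n * Q n = Q n * P n - Q n * (P n * S) := by rw [hQn, mul_sub]
          _ = Q n - Q n * S := by rw [← mul_assoc, h1]
          _ = Q n := by rw [QnS, sub_zero]
      refine ⟨sa, idem, comm, ?_⟩
      intro m hm
      have h1 : Q n * Q m = 0 := by
        rw [hQn, sub_mul, mul_assoc, SQ m hm, sub_self]
      refine ⟨h1, ?_⟩
      have := congrArg star h1
      rwa [star_mul, sa.star_eq, (ih m hm).1.star_eq, star_zero] at this
  -- norm-squared of a projection via inner product
  have normsq : ∀ (A : H →L[ℝ] H), IsSelfAdjoint A → A * A = A → ∀ f : H,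
      ‖A f‖ ^ 2 = ⟪A f, f⟫ := by
    intro A hA hI f
    have hadj : ContinuousLinearMap.adjoint A = A :=
      ContinuousLinearMap.isSelfAdjoint_iff'.mp hA
    have h2 : A (A f) = A f := by rw [← ContinuousLinearMap.mul_apply, hI]
    rw [← real_inner_self_eq_norm_sq, ← ContinuousLinearMap.adjoint_inner_left, hadj, h2]
  intro f n
  apply Finset.sum_le_sum
  intro j _
  set S : H →L[ℝ] H := ∑ k ∈ Finset.range j, Q k with hS
  have Ssa : IsSelfAdjoint S := by
    show star S = S
    rw [hS, star_sum]
    exact Finset.sum_congr rfl fun k _ => (key k).1.star_eq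
  have Scomm : P j * S = S * P j := by
    rw [hS, Finset.mul_sum, Finset.sum_mul]
    exact Finset.sum_congr rfl fun k _ => (key k).2.2.1 j
  have Sidem : S * S = S := by
    rw [hS, Finset.sum_mul]
    apply Finset.sum_congr rfl
    intro k hk
    rw [Finset.mul_sum, Finset.sum_eq_single k]
    · exact (key k).2.1
    · intro i hi hik
      rcases lt_or_gt_of_ne hik with h | h
      · exact ((key k).2.2.2 i h).1
      · exact ((key i).2.2.2 k h).2
    · intro h
      exact absurd hk h
  set T : H →L[ℝ] H := P j * S with hT
  have Tsa : IsSelfAdjoint T := by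
    rw [hT, IsSelfAdjoint, star_mul, (hsa j).star_eq, Ssa.star_eq, ← Scomm]
  have Tidem : T * T = T := by
    rw [hT]
    calc P j * S * (P j * S) = P j * (S * P j) * S := by rw [mul_assoc, mul_assoc, mul_assoc]
      _ = P j * (P j * S) * S := by rw [← Scomm]
      _ = (P j * P j) * (S * S) := by rw [mul_assoc, mul_assoc, mul_assoc]
      _ = P j * S := by rw [hidem' j, Sidem]
  have hPQ : P j - Q j = T := by
    rw [hQ' j, ← hS, ← hT, sub_sub_cancel]
  have h1 : ‖Q j f‖ ^ 2 = ⟪Q j f, f⟫ := normsq _ (key j).1 (key j).2.1 f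
  have h2 : ‖P j f‖ ^ 2 = ⟪P j f, f⟫ := normsq _ (hsa j) (hidem' j) f
  have h3 : ‖T f‖ ^ 2 = ⟪T f, f⟫ := normsq _ Tsa Tidem f
  have h4 : ⟪P j f, f⟫ - ⟪Q j f, f⟫ = ⟪T f, f⟫ := by
    rw [← inner_sub_left, ← ContinuousLinearMap.sub_apply, hPQ]
  have h5 : (0:ℝ) ≤ ‖T f‖ ^ 2 := by positivity
  linarith
end

section
/- Assume {P_j}_{j∈ℕ} are commuting orthogonal projections with P_j P_k = 0 for |j−k| ≥ M, the family is complete, each {P_j g_{jk} : k ∈ K} is a frame for P_j(H) with uniform bounds α, β, and P_j g_{jk} = g_{jk} for all j, k. Then {g_{jk} : j ∈ J, k ∈ K} is a frame for H. -/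
open scoped RealInnerProductSpace

section Helpers

variable {H : Type*} [NormedAddCommGroup H] [InnerProductSpace ℝ H] [CompleteSpace H]

lemma sa_symm {T : H →L[ℝ] H} (h : IsSelfAdjoint T) (x y : H) : ⟪T x, y⟫ = ⟪x, T y⟫ :=
  (ContinuousLinearMap.isSelfAdjoint_iff_isSymmetric.mp h) x y

lemma proj_inner_s8 {T : H →L[ℝ] H} (hsa : IsSelfAdjoint T) (hid : IsIdempotentElem T) (x : H) :
    ⟪x, T x⟫ = ‖T x‖ ^ 2 := by
  conv_lhs => rw [← hid]
  rw [ContinuousLinearMap.mul_apply, ← sa_symm hsa, real_inner_self_eq_norm_sq]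

lemma proj_norm_le_s8 {T : H →L[ℝ] H} (hsa : IsSelfAdjoint T) (hid : IsIdempotentElem T) (x : H) :
    ‖T x‖ ≤ ‖x‖ := by
  have h1 : ‖T x‖ ^ 2 ≤ ‖x‖ * ‖T x‖ := by
    rw [← proj_inner_s8 hsa hid]; exact real_inner_le_norm _ _
  nlinarith [norm_nonneg (T x), norm_nonneg x]

noncomputable def Sproj (P : ℕ → H →L[ℝ] H) : ℕ → H →L[ℝ] H
  | 0 => 1
  | (n+1) => (1 - P n) * Sproj P n

variable (P : ℕ → H →L[ℝ] H) (hsa : ∀ j, IsSelfAdjoint (P j))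
  (hidem : ∀ j, IsIdempotentElem (P j))
  (hcomm : ∀ j k, P j * P k = P k * P j)

include hcomm in
lemma Sproj_comm (n j : ℕ) : Sproj P n * P j = P j * Sproj P n := by
  induction n with
  | zero => simp [Sproj]
  | succ n ih =>
    have h1 : (1 - P n) * P j = P j * (1 - P n) := by
      rw [sub_mul, mul_sub, one_mul, mul_one, hcomm]
    rw [Sproj, mul_assoc, ih, ← mul_assoc, h1, mul_assoc]

include hsa hcomm in
lemma Sproj_sa (n : ℕ) : IsSelfAdjoint (Sproj P n) := by
  induction n with
  | zero => exact (IsSelfAdjoint.one _)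
  | succ n ih =>
    rw [Sproj]
    have h1 : IsSelfAdjoint (1 - P n) := (IsSelfAdjoint.one _).sub (hsa n)
    rw [IsSelfAdjoint, star_mul, ih, h1]
    rw [sub_mul, mul_sub, one_mul, mul_one, Sproj_comm P hcomm n n]

include hidem hcomm in
lemma Sproj_idem (n : ℕ) : IsIdempotentElem (Sproj P n) := by
  induction n with
  | zero => exact .one
  | succ n ih =>
    rw [Sproj, IsIdempotentElem]
    have h1 : Sproj P n * (1 - P n) = (1 - P n) * Sproj P n := by
      rw [sub_mul, mul_sub, one_mul, mul_one, Sproj_comm P hcomm n n]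
    have h2 : IsIdempotentElem (1 - P n) := (hidem n).one_sub
    calc (1 - P n) * Sproj P n * ((1 - P n) * Sproj P n)
        = ((1 - P n) * (1 - P n)) * (Sproj P n * Sproj P n) := by
          rw [mul_assoc, ← mul_assoc (Sproj P n), h1]
          rw [mul_assoc, mul_assoc]
      _ = (1 - P n) * Sproj P n := by rw [h2, ih]

include hidem hcomm in
lemma Sproj_P_zero {j n : ℕ} (h : j < n) : P j * Sproj P n = 0 := by
  induction n with
  | zero => omega
  | succ n ih =>
    rcases Nat.lt_succ_iff_lt_or_eq.mp h with h' | rfl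
    · have h1 : P j * (1 - P n) = (1 - P n) * P j := by
        rw [mul_sub, sub_mul, one_mul, mul_one, hcomm]
      rw [Sproj, ← mul_assoc, h1, mul_assoc, ih h', mul_zero]
    · rw [Sproj, ← mul_assoc, mul_sub, mul_one, (hidem j), sub_self, zero_mul]

include hidem hcomm in
lemma Sproj_mul_Sproj {n m : ℕ} (h : n ≤ m) : Sproj P n * Sproj P m = Sproj P m := by
  induction m with
  | zero => interval_cases n; simp [Sproj]
  | succ m ih =>
    rcases Nat.le_succ_iff.mp h with h' | rfl
    · have hc : Sproj P n * (1 - P m) = (1 - P m) * Sproj P n := by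
        rw [mul_sub, sub_mul, one_mul, mul_one, Sproj_comm P hcomm n m]
      rw [Sproj, ← mul_assoc, hc, mul_assoc, ih h']
    · exact (Sproj_idem P hidem hcomm _)

include hsa hidem in
lemma fiber_sum_le (u : Finset ℕ)
    (horthu : ∀ j ∈ u, ∀ k ∈ u, j ≠ k → P j * P k = 0) (f : H) :
    ∑ j ∈ u, ‖P j f‖ ^ 2 ≤ ‖f‖ ^ 2 := by
  have h1 : ⟪f, ∑ j ∈ u, P j f⟫ = ∑ j ∈ u, ‖P j f‖ ^ 2 := by
    rw [inner_sum]
    exact Finset.sum_congr rfl fun j _ => proj_inner_s8 (hsa j) (hidem j) f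
  have h2 : ⟪(∑ j ∈ u, P j f), ∑ j ∈ u, P j f⟫ = ∑ j ∈ u, ‖P j f‖ ^ 2 := by
    rw [sum_inner]
    refine Finset.sum_congr rfl fun j hj => ?_
    rw [inner_sum, Finset.sum_eq_single j]
    · exact real_inner_self_eq_norm_sq _
    · intro k hk hkj
      have hz : ⟪P j f, P k f⟫ = ⟪f, (P j * P k) f⟫ := by
        rw [ContinuousLinearMap.mul_apply, ← sa_symm (hsa j)]
      rw [hz, horthu j hj k hk (Ne.symm hkj)]
      simp
    · intro h; exact (h hj).elim
  have h3 : ⟪f, ∑ j ∈ u, P j f⟫ ≤ ‖f‖ * ‖∑ j ∈ u, P j f‖ := real_inner_le_norm _ _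
  have h4 : ‖∑ j ∈ u, P j f‖ ^ 2 = ∑ j ∈ u, ‖P j f‖ ^ 2 := by
    rw [← real_inner_self_eq_norm_sq, h2]
  have h5 : (0:ℝ) ≤ ∑ j ∈ u, ‖P j f‖ ^ 2 :=
    Finset.sum_nonneg fun j _ => sq_nonneg _
  nlinarith [norm_nonneg f, norm_nonneg (∑ j ∈ u, P j f)]

end Helpers

theorem stmt8 {H : Type*} [NormedAddCommGroup H] [InnerProductSpace ℝ H] [CompleteSpace H]
    {K : Type*} [Countable K]
    (P : ℕ → H →L[ℝ] H) (hsa : ∀ j, IsSelfAdjoint (P j)) (hidem : ∀ j, IsIdempotentElem (P j))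
    (hcomm : ∀ j k, (P j) ∘L (P k) = (P k) ∘L (P j))
    (M : ℕ) (hM : 0 < M)
    (horth : ∀ j k : ℕ, (M : ℤ) ≤ |(j : ℤ) - (k : ℤ)| → (P j) ∘L (P k) = 0)
    (hcomplete : ∀ f : H, (∀ j, P j f = 0) → f = 0)
    (g : ℕ → K → H) (α β : ℝ) (hα : 0 < α) (hβ : 0 < β)
    (hlocal : ∀ j, ∀ f ∈ Set.range (P j),
      α * ‖f‖ ^ 2 ≤ ∑' k, ⟪f, P j (g j k)⟫ ^ 2 ∧ ∑' k, ⟪f, P j (g j k)⟫ ^ 2 ≤ β * ‖f‖ ^ 2)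
    (hfix : ∀ j k, P j (g j k) = g j k) :
    ∃ C D : ℝ, 0 < C ∧ 0 < D ∧ ∀ f : H,
      C * ‖f‖ ^ 2 ≤ ∑' p : ℕ × K, ⟪f, g p.1 p.2⟫ ^ 2 ∧
      ∑' p : ℕ × K, ⟪f, g p.1 p.2⟫ ^ 2 ≤ D * ‖f‖ ^ 2 := by
  have hcomm' : ∀ j k, P j * P k = P k * P j := hcomm
  have hMR : (0:ℝ) < M := by exact_mod_cast hM
  refine ⟨α, β * M, hα, mul_pos hβ hMR, fun f => ?_⟩
  have hsym : ∀ (j : ℕ) (x y : H), ⟪P j x, y⟫ = ⟪x, P j y⟫ := fun j => sa_symm (hsa j)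
  -- finite sums of ‖P j f‖² are bounded by M ‖f‖²
  have hfin : ∀ u : Finset ℕ, ∑ j ∈ u, ‖P j f‖ ^ 2 ≤ M * ‖f‖ ^ 2 := by
    intro u
    have hmap : ∀ j ∈ u, j % M ∈ Finset.range M :=
      fun j _ => Finset.mem_range.mpr (Nat.mod_lt _ hM)
    rw [← Finset.sum_fiberwise_of_maps_to hmap]
    calc ∑ r ∈ Finset.range M, ∑ j ∈ u.filter (· % M = r), ‖P j f‖ ^ 2
        ≤ ∑ _r ∈ Finset.range M, ‖f‖ ^ 2 := by
          refine Finset.sum_le_sum fun r _ => ?_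
          refine fiber_sum_le P hsa hidem _ ?_ f
          intro j hj k hk hjk
          simp only [Finset.mem_filter] at hj hk
          have hmod : j ≡ k [MOD M] := hj.2.trans hk.2.symm
          have hdvd : (M:ℤ) ∣ (j:ℤ) - (k:ℤ) := dvd_sub_comm.mp hmod.dvd
          have hne : (j:ℤ) - (k:ℤ) ≠ 0 := sub_ne_zero.mpr (by exact_mod_cast hjk)
          exact horth j k (Int.le_of_dvd (abs_pos.mpr hne) ((dvd_abs _ _).mpr hdvd))
      _ = M * ‖f‖ ^ 2 := by rw [Finset.sum_const, Finset.card_range, nsmul_eq_mul]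
  have hbsum : Summable (fun j => ‖P j f‖ ^ 2) :=
    summable_of_sum_le (fun j => sq_nonneg _) hfin
  have hbub : ∑' j, ‖P j f‖ ^ 2 ≤ M * ‖f‖ ^ 2 := Summable.tsum_le_of_sum_le hbsum hfin
  -- lower bound ‖f‖² ≤ ∑ ‖P j f‖² via the products Sproj
  have happ : ∀ (A B : H →L[ℝ] H) (v : H), A * B = A * B → True := fun _ _ _ _ => trivial
  have hstep : ∀ N, ‖Sproj P (N+1) f‖ ^ 2 = ‖Sproj P N f‖ ^ 2 - ‖P N (Sproj P N f)‖ ^ 2 := by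
    intro N
    have h1 : Sproj P (N+1) f = Sproj P N f - P N (Sproj P N f) := by
      show ((1 - P N) * Sproj P N) f = _
      simp [ContinuousLinearMap.mul_apply, ContinuousLinearMap.sub_apply]
    rw [h1, norm_sub_sq_real, proj_inner_s8 (hsa N) (hidem N)]
    ring
  have hPx_le : ∀ N, ‖P N (Sproj P N f)‖ ≤ ‖P N f‖ := by
    intro N
    have h1 : P N (Sproj P N f) = Sproj P N (P N f) := by
      have := congrArg (fun T : H →L[ℝ] H => T f) (Sproj_comm P hcomm' N N)
      simpa [ContinuousLinearMap.mul_apply] using this.symm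
    rw [h1]
    exact proj_norm_le_s8 (Sproj_sa P hsa hcomm' N) (Sproj_idem P hidem hcomm' N) _
  have htel : ∀ N, ‖f‖ ^ 2 - ‖Sproj P N f‖ ^ 2
      = ∑ j ∈ Finset.range N, ‖P j (Sproj P j f)‖ ^ 2 := by
    intro N
    induction N with
    | zero => simp [Sproj]
    | succ N ih => rw [Finset.sum_range_succ, ← ih, hstep]; ring
  have hlowN : ∀ N, ‖f‖ ^ 2 - ‖Sproj P N f‖ ^ 2 ≤ ∑' j, ‖P j f‖ ^ 2 := by
    intro N
    rw [htel]
    calc ∑ j ∈ Finset.range N, ‖P j (Sproj P j f)‖ ^ 2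
        ≤ ∑ j ∈ Finset.range N, ‖P j f‖ ^ 2 :=
          Finset.sum_le_sum fun j _ => pow_le_pow_left₀ (norm_nonneg _) (hPx_le j) 2
      _ ≤ ∑' j, ‖P j f‖ ^ 2 := Summable.sum_le_tsum _ (fun j _ => sq_nonneg _) hbsum
  -- the sequence a N = ‖Sproj P N f‖² tends to 0
  have hanti : Antitone (fun N => ‖Sproj P N f‖ ^ 2) := by
    apply antitone_nat_of_succ_le
    intro N
    rw [hstep N]
    nlinarith [sq_nonneg ‖P N (Sproj P N f)‖]
  have haC : CauchySeq (fun N => ‖Sproj P N f‖ ^ 2) :=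
    (tendsto_atTop_ciInf hanti ⟨0, by rintro y ⟨N, rfl⟩; exact sq_nonneg _⟩).cauchySeq
  have hinner : ∀ {n m : ℕ}, n ≤ m → ⟪Sproj P n f, Sproj P m f⟫ = ‖Sproj P m f‖ ^ 2 := by
    intro n m h
    have h1 : Sproj P n (Sproj P m f) = Sproj P m f := by
      have := congrArg (fun T : H →L[ℝ] H => T f) (Sproj_mul_Sproj P hidem hcomm' h)
      simpa [ContinuousLinearMap.mul_apply] using this
    rw [sa_symm (Sproj_sa P hsa hcomm' n), h1]
    exact proj_inner_s8 (Sproj_sa P hsa hcomm' m) (Sproj_idem P hidem hcomm' m) f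
  have hdist : ∀ {n m : ℕ}, n ≤ m →
      ‖Sproj P n f - Sproj P m f‖ ^ 2 = ‖Sproj P n f‖ ^ 2 - ‖Sproj P m f‖ ^ 2 := by
    intro n m h
    rw [norm_sub_sq_real, hinner h]
    ring
  have hxC : CauchySeq (fun N => Sproj P N f) := by
    rw [Metric.cauchySeq_iff]
    intro ε hε
    obtain ⟨N₀, hN₀⟩ := Metric.cauchySeq_iff.mp haC (ε ^ 2) (by positivity)
    refine ⟨N₀, fun m hm n hn => ?_⟩
    have key : ∀ p q : ℕ, N₀ ≤ p → N₀ ≤ q → p ≤ q → dist (Sproj P p f) (Sproj P q f) < ε := by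
      intro p q hp hq hpq
      have h1 := hN₀ p hp q hq
      rw [Real.dist_eq] at h1
      have h2 : ‖Sproj P p f - Sproj P q f‖ ^ 2 < ε ^ 2 := by
        rw [hdist hpq]
        calc ‖Sproj P p f‖ ^ 2 - ‖Sproj P q f‖ ^ 2
            ≤ |‖Sproj P p f‖ ^ 2 - ‖Sproj P q f‖ ^ 2| := le_abs_self _
          _ < ε ^ 2 := h1
      rw [dist_eq_norm]
      nlinarith [norm_nonneg (Sproj P p f - Sproj P q f)]
    rcases le_total m n with h | h
    · exact key m n hm hn h
    · rw [dist_comm]; exact key n m hn hm h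
  obtain ⟨y, hy⟩ := cauchySeq_tendsto_of_complete hxC
  have hPy : ∀ j, P j y = 0 := by
    intro j
    have h1 : Filter.Tendsto (fun N => P j (Sproj P N f)) Filter.atTop (nhds (P j y)) :=
      ((P j).continuous.tendsto y).comp hy
    have h3 : Filter.Tendsto (fun N => P j (Sproj P N f)) Filter.atTop (nhds 0) := by
      apply Filter.Tendsto.congr' _ tendsto_const_nhds
      filter_upwards [Filter.eventually_gt_atTop j] with N hN
      have := congrArg (fun T : H →L[ℝ] H => T f) (Sproj_P_zero P hidem hcomm' hN)
      simpa [ContinuousLinearMap.mul_apply] using this.symm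
    exact tendsto_nhds_unique h1 h3
  have haz : Filter.Tendsto (fun N => ‖Sproj P N f‖ ^ 2) Filter.atTop (nhds 0) := by
    have h0 : y = 0 := hcomplete y hPy
    have h1 : Filter.Tendsto (fun N => ‖Sproj P N f‖ ^ 2) Filter.atTop (nhds (‖y‖ ^ 2)) :=
      (hy.norm).pow 2
    simpa [h0] using h1
  have hlow : ‖f‖ ^ 2 ≤ ∑' j, ‖P j f‖ ^ 2 := by
    have h1 : Filter.Tendsto (fun N => ‖f‖ ^ 2 - ‖Sproj P N f‖ ^ 2) Filter.atTop
        (nhds (‖f‖ ^ 2)) := by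
      simpa using (tendsto_const_nhds : Filter.Tendsto (fun _ : ℕ => ‖f‖ ^ 2) Filter.atTop (nhds (‖f‖ ^ 2))).sub haz
    exact le_of_tendsto' h1 hlowN
  -- relate the frame coefficients
  have hPP : ∀ (j : ℕ) (v : H), P j (P j v) = P j v := by
    intro j v
    have := congrArg (fun T : H →L[ℝ] H => T v) (hidem j)
    simpa [ContinuousLinearMap.mul_apply] using this
  have hterm : ∀ j k, ⟪P j f, P j (g j k)⟫ = ⟪f, g j k⟫ := by
    intro j k
    calc ⟪P j f, P j (g j k)⟫ = ⟪f, P j (P j (g j k))⟫ := hsym j f _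
      _ = ⟪f, P j (g j k)⟫ := by rw [hPP]
      _ = ⟪f, g j k⟫ := by rw [hfix]
  have hloc : ∀ j, α * ‖P j f‖ ^ 2 ≤ ∑' k, ⟪P j f, P j (g j k)⟫ ^ 2 ∧
      ∑' k, ⟪P j f, P j (g j k)⟫ ^ 2 ≤ β * ‖P j f‖ ^ 2 :=
    fun j => hlocal j (P j f) ⟨f, rfl⟩
  have hsl : ∀ j, Summable (fun k => ⟪P j f, P j (g j k)⟫ ^ 2) := by
    intro j
    by_contra hns
    have h0 : ∑' k, ⟪P j f, P j (g j k)⟫ ^ 2 = 0 := tsum_eq_zero_of_not_summable hns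
    have h1 := (hloc j).1
    rw [h0] at h1
    have h2 : P j f = 0 := by
      have h3 : ‖P j f‖ ^ 2 ≤ 0 := by nlinarith
      have h4 : ‖P j f‖ = 0 := by nlinarith [norm_nonneg (P j f), sq_nonneg ‖P j f‖]
      exact norm_eq_zero.mp h4
    apply hns
    apply summable_of_ne_finset_zero (s := ∅)
    intro k _
    rw [h2]
    simp
  have hFslice : ∀ j, Summable (fun k => ⟪f, g j k⟫ ^ 2) := by
    intro j; exact (hsl j).congr fun k => by rw [hterm]
  have hsliceEq : ∀ j, ∑' k, ⟪f, g j k⟫ ^ 2 = ∑' k, ⟪P j f, P j (g j k)⟫ ^ 2 :=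
    fun j => tsum_congr fun k => by rw [hterm]
  have hasum : Summable (fun j => ∑' k, ⟪f, g j k⟫ ^ 2) := by
    refine Summable.of_nonneg_of_le (fun j => tsum_nonneg fun k => sq_nonneg _)
      (fun j => ?_) (hbsum.mul_left β)
    rw [hsliceEq j]
    exact (hloc j).2
  have hFsum : Summable (fun p : ℕ × K => ⟪f, g p.1 p.2⟫ ^ 2) :=
    (summable_prod_of_nonneg (fun p => sq_nonneg _)).mpr ⟨hFslice, hasum⟩
  have hProdEq : ∑' p : ℕ × K, ⟪f, g p.1 p.2⟫ ^ 2 = ∑' j, ∑' k, ⟪f, g j k⟫ ^ 2 :=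
    Summable.tsum_prod' hFsum hFslice
  constructor
  · rw [hProdEq]
    calc α * ‖f‖ ^ 2 ≤ α * ∑' j, ‖P j f‖ ^ 2 := mul_le_mul_of_nonneg_left hlow hα.le
      _ = ∑' j, α * ‖P j f‖ ^ 2 := tsum_mul_left.symm
      _ ≤ ∑' j, ∑' k, ⟪f, g j k⟫ ^ 2 := by
          refine Summable.tsum_le_tsum (fun j => ?_) (hbsum.mul_left α) hasum
          rw [hsliceEq j]
          exact (hloc j).1
  · rw [hProdEq]
    calc ∑' j, ∑' k, ⟪f, g j k⟫ ^ 2 ≤ ∑' j, β * ‖P j f‖ ^ 2 := by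
          refine Summable.tsum_le_tsum (fun j => ?_) hasum (hbsum.mul_left β)
          rw [hsliceEq j]
          exact (hloc j).2
      _ = β * ∑' j, ‖P j f‖ ^ 2 := tsum_mul_left
      _ ≤ β * (M * ‖f‖ ^ 2) := mul_le_mul_of_nonneg_left hbub hβ.le
      _ = (β * M) * ‖f‖ ^ 2 := by ring
end

section
/- Let D be a bounded diagonal operator on ℓ²(ℕ) and {I_j}_{j∈ℕ} ⊂ ℕ with |I_j| ≤ L, ∪_j I_j = ℕ, and I_j ∩ I_k = ∅ for |j−k| > M. Let D_j be the submatrix of D indexed by I_j, and for each j let G_j ⊂ ℓ²(ℕ) consist of vectors supported in I_j such that {D_j^n g : g ∈ G_j, 0 ≤ n < L} is a frame for ℓ²(I_j) with bounds α, β independent of j. Then {D^n g : 0 ≤ n < L, g ∈ ∪_j G_j} is a frame for ℓ²(ℕ). -/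
open Finset

private lemma rear16 (I : ℕ → Finset ℕ) (h : ℕ → ℝ) (J : Finset ℕ) :
    ∑ j ∈ J, ∑ i ∈ I j, h i
      = ∑ i ∈ J.biUnion I, (((J.filter fun j => i ∈ I j).card : ℝ)) * h i := by
  classical
  have key : ∀ j ∈ J, ∑ i ∈ I j, h i = ∑ i ∈ J.biUnion I, if i ∈ I j then h i else 0 := by
    intro j hj
    rw [Finset.sum_ite_mem, Finset.inter_eq_right.mpr (Finset.subset_biUnion_of_mem I hj)]
  rw [Finset.sum_congr rfl key, Finset.sum_comm]
  refine Finset.sum_congr rfl fun i _ => ?_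
  rw [Finset.sum_ite, Finset.sum_const_zero, add_zero, Finset.sum_const, nsmul_eq_mul]

private lemma mult16 (I : ℕ → Finset ℕ) (M : ℕ)
    (hdisj : ∀ j k : ℕ, (M : ℤ) < |(j : ℤ) - (k : ℤ)| → Disjoint (I j) (I k))
    (J : Finset ℕ) (i : ℕ) :
    (J.filter fun j => i ∈ I j).card ≤ 2 * M + 1 := by
  classical
  rcases (J.filter fun j => i ∈ I j).eq_empty_or_nonempty with h | ⟨j₀, hj₀⟩
  · simp [h]
  · have hj₀' := Finset.mem_filter.mp hj₀
    have hsub : (J.filter fun j => i ∈ I j) ⊆ Finset.Icc (j₀ - M) (j₀ + M) := by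
      intro j hj
      have hj' := Finset.mem_filter.mp hj
      by_contra hmem
      simp only [Finset.mem_Icc, not_and_or, not_le] at hmem
      have habs : (M : ℤ) < |(j : ℤ) - (j₀ : ℤ)| := by
        rw [lt_abs]; omega
      exact (Finset.disjoint_left.mp (hdisj j j₀ habs) hj'.2) hj₀'.2
    calc (J.filter fun j => i ∈ I j).card ≤ (Finset.Icc (j₀ - M) (j₀ + M)).card :=
          Finset.card_le_card hsub
      _ ≤ 2 * M + 1 := by rw [Nat.card_Icc]; omega

theorem stmt16 (d : ℕ → ℝ) (hd : ∃ C : ℝ, ∀ i, |d i| ≤ C)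
    (L M : ℕ) (hL : 0 < L)
    (I : ℕ → Finset ℕ) (hcard : ∀ j, (I j).card ≤ L)
    (hcover : ∀ n : ℕ, ∃ j, n ∈ I j)
    (hdisj : ∀ j k : ℕ, (M : ℤ) < |(j : ℤ) - (k : ℤ)| → Disjoint (I j) (I k))
    (G : ℕ → Set (ℕ → ℝ)) (hGcount : ∀ j, (G j).Countable)
    (hGsupp : ∀ j, ∀ g ∈ G j, ∀ i, i ∉ I j → g i = 0)
    (α β : ℝ) (hα : 0 < α) (hβ : 0 < β)
    (hlocal : ∀ j, ∀ f : ℕ → ℝ, (∀ i, i ∉ I j → f i = 0) →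
      α * ∑ i ∈ I j, f i ^ 2 ≤
        ∑' g : G j, ∑ n ∈ Finset.range L,
          (∑ i ∈ I j, f i * (d i ^ n * (g : ℕ → ℝ) i)) ^ 2 ∧
      ∑' g : G j, ∑ n ∈ Finset.range L,
          (∑ i ∈ I j, f i * (d i ^ n * (g : ℕ → ℝ) i)) ^ 2 ≤
        β * ∑ i ∈ I j, f i ^ 2) :
    ∃ A B : ℝ, 0 < A ∧ 0 < B ∧ ∀ f : ℕ → ℝ, Summable (fun i => f i ^ 2) →
      A * ∑' i, f i ^ 2 ≤
        ∑' p : Σ j : ℕ, G j, ∑ n ∈ Finset.range L,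
          (∑' i : ℕ, f i * (d i ^ n * (p.2 : ℕ → ℝ) i)) ^ 2 ∧
      ∑' p : Σ j : ℕ, G j, ∑ n ∈ Finset.range L,
          (∑' i : ℕ, f i * (d i ^ n * (p.2 : ℕ → ℝ) i)) ^ 2 ≤
        B * ∑' i, f i ^ 2 := by
  classical
  refine ⟨α, β * (2 * M + 1 : ℕ), hα, by positivity, ?_⟩
  intro f hf
  set c : ℕ → ℝ := fun j => ∑ i ∈ I j, f i ^ 2 with hcdef
  have hc0 : ∀ j, 0 ≤ c j := fun j => Finset.sum_nonneg fun i _ => sq_nonneg _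
  have hftsum0 : (0:ℝ) ≤ ∑' i, f i ^ 2 := tsum_nonneg fun i => sq_nonneg _
  -- uniform bound on partial sums of c
  have hJbound : ∀ J : Finset ℕ, ∑ j ∈ J, c j ≤ (2 * M + 1 : ℕ) * ∑' i, f i ^ 2 := by
    intro J
    calc ∑ j ∈ J, c j
        = ∑ i ∈ J.biUnion I, (((J.filter fun j => i ∈ I j).card : ℝ)) * f i ^ 2 :=
          rear16 I (fun i => f i ^ 2) J
      _ ≤ ∑ i ∈ J.biUnion I, ((2 * M + 1 : ℕ) : ℝ) * f i ^ 2 := by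
          refine Finset.sum_le_sum fun i _ => ?_
          exact mul_le_mul_of_nonneg_right (by exact_mod_cast mult16 I M hdisj J i) (sq_nonneg _)
      _ = ((2 * M + 1 : ℕ) : ℝ) * ∑ i ∈ J.biUnion I, f i ^ 2 := by rw [Finset.mul_sum]
      _ ≤ ((2 * M + 1 : ℕ) : ℝ) * ∑' i, f i ^ 2 := by
          refine mul_le_mul_of_nonneg_left ?_ (by positivity)
          exact Summable.sum_le_tsum _ (fun i _ => sq_nonneg _) hf
  have hcsum : Summable c :=
    summable_of_sum_le hc0 hJbound
  have htsum_c_le : ∑' j, c j ≤ (2 * M + 1 : ℕ) * ∑' i, f i ^ 2 :=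
    Summable.tsum_le_of_sum_le hcsum hJbound
  -- lower comparison
  have hf_le_c : ∑' i, f i ^ 2 ≤ ∑' j, c j := by
    refine Summable.tsum_le_of_sum_le hf fun s => ?_
    set jf : ℕ → ℕ := fun i => (hcover i).choose with hjfdef
    have hjf : ∀ i, i ∈ I (jf i) := fun i => (hcover i).choose_spec
    set J : Finset ℕ := s.image jf with hJdef
    have hsub : s ⊆ J.biUnion I := fun i hi =>
      Finset.mem_biUnion.mpr ⟨jf i, Finset.mem_image_of_mem _ hi, hjf i⟩
    calc ∑ i ∈ s, f i ^ 2
        ≤ ∑ i ∈ J.biUnion I, f i ^ 2 :=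
          Finset.sum_le_sum_of_subset_of_nonneg hsub fun i _ _ => sq_nonneg _
      _ ≤ ∑ i ∈ J.biUnion I, (((J.filter fun j => i ∈ I j).card : ℝ)) * f i ^ 2 := by
          refine Finset.sum_le_sum fun i hi => ?_
          obtain ⟨j, hjJ, hij⟩ := Finset.mem_biUnion.mp hi
          have hpos : 0 < (J.filter fun j => i ∈ I j).card :=
            Finset.card_pos.mpr ⟨j, Finset.mem_filter.mpr ⟨hjJ, hij⟩⟩
          have : (1:ℝ) ≤ ((J.filter fun j => i ∈ I j).card : ℝ) := by exact_mod_cast hpos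
          nlinarith [sq_nonneg (f i)]
      _ = ∑ j ∈ J, c j := (rear16 I (fun i => f i ^ 2) J).symm
      _ ≤ ∑' j, c j := Summable.sum_le_tsum J (fun j _ => hc0 j) hcsum
  -- per-block analysis
  have key : ∀ j : ℕ,
      Summable (fun g : G j => ∑ n ∈ Finset.range L,
        (∑ i ∈ I j, f i * (d i ^ n * (g : ℕ → ℝ) i)) ^ 2) ∧
      α * c j ≤ (∑' g : G j, ∑ n ∈ Finset.range L,
        (∑ i ∈ I j, f i * (d i ^ n * (g : ℕ → ℝ) i)) ^ 2) ∧
      (∑' g : G j, ∑ n ∈ Finset.range L,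
        (∑ i ∈ I j, f i * (d i ^ n * (g : ℕ → ℝ) i)) ^ 2) ≤ β * c j := by
    intro j
    set fj : ℕ → ℝ := fun i => if i ∈ I j then f i else 0 with hfjdef
    have hsupp : ∀ i, i ∉ I j → fj i = 0 := fun i hi => if_neg hi
    obtain ⟨h1, h2⟩ := hlocal j fj hsupp
    have e1 : ∑ i ∈ I j, fj i ^ 2 = c j :=
      Finset.sum_congr rfl fun i hi => by simp [hfjdef, if_pos hi]
    have e2 : ∀ (g : ℕ → ℝ) (n : ℕ),
        ∑ i ∈ I j, fj i * (d i ^ n * g i) = ∑ i ∈ I j, f i * (d i ^ n * g i) :=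
      fun g n => Finset.sum_congr rfl fun i hi => by simp [hfjdef, if_pos hi]
    have e3 : (∑' g : G j, ∑ n ∈ Finset.range L,
          (∑ i ∈ I j, fj i * (d i ^ n * (g : ℕ → ℝ) i)) ^ 2)
        = ∑' g : G j, ∑ n ∈ Finset.range L,
          (∑ i ∈ I j, f i * (d i ^ n * (g : ℕ → ℝ) i)) ^ 2 :=
      tsum_congr fun g => Finset.sum_congr rfl fun n _ => by rw [e2]
    rw [e1, e3] at h1 h2
    by_cases hS : Summable (fun g : G j => ∑ n ∈ Finset.range L,
        (∑ i ∈ I j, f i * (d i ^ n * (g : ℕ → ℝ) i)) ^ 2)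
    · exact ⟨hS, h1, h2⟩
    · exfalso
      rw [tsum_eq_zero_of_not_summable hS] at h1
      have hcj : c j = 0 := le_antisymm (nonpos_of_mul_nonpos_right (by linarith) hα) (hc0 j)
      have hfz : ∀ i ∈ I j, f i = 0 := by
        intro i hi
        have := (Finset.sum_eq_zero_iff_of_nonneg fun i _ => sq_nonneg (f i)).mp hcj i hi
        exact (pow_eq_zero_iff two_ne_zero).mp this
      apply hS
      have : (fun g : G j => ∑ n ∈ Finset.range L,
          (∑ i ∈ I j, f i * (d i ^ n * (g : ℕ → ℝ) i)) ^ 2) = fun _ => 0 := by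
        funext g
        refine Finset.sum_eq_zero fun n _ => ?_
        have : ∑ i ∈ I j, f i * (d i ^ n * (g : ℕ → ℝ) i) = 0 :=
          Finset.sum_eq_zero fun i hi => by rw [hfz i hi, zero_mul]
        rw [this]; ring
      rw [this]
      exact summable_zero
  -- put it together
  set F : (Σ j : ℕ, G j) → ℝ := fun p => ∑ n ∈ Finset.range L,
      (∑ i ∈ I p.1, f i * (d i ^ n * (p.2 : ℕ → ℝ) i)) ^ 2 with hFdef
  have hF0 : ∀ p, 0 ≤ F p := fun p => Finset.sum_nonneg fun n _ => sq_nonneg _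
  have hSsum : Summable (fun j => ∑' g : G j, F ⟨j, g⟩) := by
    refine Summable.of_nonneg_of_le (fun j => tsum_nonneg fun g => hF0 _)
      (fun j => (key j).2.2) (hcsum.mul_left β)
  have hFsum : Summable F :=
    (summable_sigma_of_nonneg hF0).mpr ⟨fun j => (key j).1, hSsum⟩
  have hFsigma : ∑' p, F p = ∑' (j : ℕ) (g : G j), F ⟨j, g⟩ :=
    Summable.tsum_sigma' (fun j => (key j).1) hFsum
  -- identify goal tsum with F
  have hgoal : (∑' p : Σ j : ℕ, G j, ∑ n ∈ Finset.range L,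
        (∑' i : ℕ, f i * (d i ^ n * (p.2 : ℕ → ℝ) i)) ^ 2) = ∑' p, F p := by
    refine tsum_congr fun p => Finset.sum_congr rfl fun n _ => ?_
    congr 1
    refine tsum_eq_sum fun i hi => ?_
    rw [hGsupp p.1 p.2 p.2.2 i hi, mul_zero, mul_zero]
  rw [hgoal, hFsigma]
  constructor
  · calc α * ∑' i, f i ^ 2 ≤ α * ∑' j, c j := by
          exact mul_le_mul_of_nonneg_left hf_le_c hα.le
      _ = ∑' j, α * c j := (tsum_mul_left).symm
      _ ≤ ∑' (j : ℕ) (g : G j), F ⟨j, g⟩ :=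
          Summable.tsum_le_tsum (fun j => (key j).2.1) (hcsum.mul_left α) hSsum
  · calc (∑' (j : ℕ) (g : G j), F ⟨j, g⟩) ≤ ∑' j, β * c j :=
          Summable.tsum_le_tsum (fun j => (key j).2.2) hSsum (hcsum.mul_left β)
      _ = β * ∑' j, c j := tsum_mul_left
      _ ≤ β * ((2 * M + 1 : ℕ) * ∑' i, f i ^ 2) :=
          mul_le_mul_of_nonneg_left htsum_c_le hβ.le
      _ = β * (2 * M + 1 : ℕ) * ∑' i, f i ^ 2 := by ring
end

section
/- Let {P_j}_{j∈ℕ} be a complete family of commuting orthogonal projections with P_jP_k = 0 for |j−k| ≥ M, and suppose each {P_j g_{jk} : k ∈ K} is a frame for P_j(H) with uniform bounds α, β and P_j g_{jk} = g_{jk}. Then {g_{jk}} is a frame for H with lower bound α·1 and upper bound β·M. -/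
open scoped RealInnerProductSpace

theorem stmt18 {H : Type*} [NormedAddCommGroup H] [InnerProductSpace ℝ H] [CompleteSpace H]
    {K : Type*} [Countable K]
    (P : ℕ → H →L[ℝ] H) (hsa : ∀ j, IsSelfAdjoint (P j)) (hidem : ∀ j, IsIdempotentElem (P j))
    (hcomm : ∀ j k, (P j) ∘L (P k) = (P k) ∘L (P j))
    (M : ℕ) (hM : 0 < M)
    (horth : ∀ j k : ℕ, (M : ℤ) ≤ |(j : ℤ) - (k : ℤ)| → (P j) ∘L (P k) = 0)
    (hcomplete : ∀ f : H, (∀ j, P j f = 0) → f = 0)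
    (g : ℕ → K → H) (α β : ℝ) (hα : 0 < α) (hβ : 0 < β)
    (hlocal : ∀ j, ∀ f ∈ Set.range (P j),
      α * ‖f‖ ^ 2 ≤ ∑' k, ⟪f, P j (g j k)⟫ ^ 2 ∧ ∑' k, ⟪f, P j (g j k)⟫ ^ 2 ≤ β * ‖f‖ ^ 2)
    (hfix : ∀ j k, P j (g j k) = g j k) :
    ∀ f : H,
      α * 1 * ‖f‖ ^ 2 ≤ ∑' p : ℕ × K, ⟪f, g p.1 p.2⟫ ^ 2 ∧
      ∑' p : ℕ × K, ⟪f, g p.1 p.2⟫ ^ 2 ≤ β * (M : ℝ) * ‖f‖ ^ 2 := by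
  -- basic facts about the projections
  have hsym : ∀ j (x y : H), ⟪P j x, y⟫ = ⟪x, P j y⟫ := fun j =>
    ContinuousLinearMap.isSelfAdjoint_iff_isSymmetric.mp (hsa j)
  have happ : ∀ j (x : H), P j (P j x) = P j x := by
    intro j x
    have h := DFunLike.congr_fun (hidem j) x
    simpa [ContinuousLinearMap.mul_apply] using h
  have hPnormsq : ∀ j (x : H), ‖P j x‖ ^ 2 = ⟪x, P j x⟫ := by
    intro j x
    rw [← real_inner_self_eq_norm_sq]
    calc ⟪P j x, P j x⟫ = ⟪x, P j (P j x)⟫ := hsym j x (P j x)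
      _ = ⟪x, P j x⟫ := by rw [happ]
  have hPcontr : ∀ j (x : H), ‖P j x‖ ≤ ‖x‖ := by
    intro j x
    have h1 : ‖P j x‖ ^ 2 = ⟪x, P j x⟫ := hPnormsq j x
    have h2 : ⟪x, P j x⟫ ≤ ‖x‖ * ‖P j x‖ := real_inner_le_norm x (P j x)
    nlinarith [norm_nonneg (P j x), norm_nonneg x]
  intro f
  -- the local sums
  set c : ℕ → K → ℝ := fun j k => ⟪P j f, P j (g j k)⟫ ^ 2 with hc
  have heq : ∀ j k, ⟪f, g j k⟫ = ⟪P j f, P j (g j k)⟫ := by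
    intro j k
    rw [hfix j k, hsym j f (g j k), hfix j k]
  have hcnonneg : ∀ j k, 0 ≤ c j k := fun j k => sq_nonneg _
  have hlocal' : ∀ j, α * ‖P j f‖ ^ 2 ≤ ∑' k, c j k ∧ ∑' k, c j k ≤ β * ‖P j f‖ ^ 2 :=
    fun j => hlocal j (P j f) ⟨f, rfl⟩
  -- summability of each local family
  have hks : ∀ j, Summable (c j) := by
    intro j
    by_cases h : Summable (c j)
    · exact h
    · have h0 : ∑' k, c j k = 0 := tsum_eq_zero_of_not_summable h
      have h1 := (hlocal' j).1
      rw [h0] at h1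
      have h2 : ‖P j f‖ ^ 2 ≤ 0 := by nlinarith
      have h3 : P j f = 0 := by
        have := sq_nonneg ‖P j f‖
        have h4 : ‖P j f‖ ^ 2 = 0 := le_antisymm h2 this
        simpa [pow_eq_zero_iff] using h4
      have : c j = fun _ => 0 := by
        funext k; simp [hc, h3]
      rw [this]
      exact summable_zero
  -- fusion frame upper bound : partial sums bounded by M * ‖f‖^2
  have horthf : ∀ j k : ℕ, j ≠ k → j % M = k % M → ⟪P j f, P k f⟫ = 0 := by
    intro j k hjk hmod
    have hdvd : (M : ℤ) ∣ (k : ℤ) - (j : ℤ) := Nat.ModEq.dvd (hmod : j ≡ k [MOD M])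
    have hdvd2 : (M : ℤ) ∣ |(j : ℤ) - (k : ℤ)| := by
      rw [abs_sub_comm]
      exact (dvd_abs _ _).mpr hdvd
    have hne : (j : ℤ) - (k : ℤ) ≠ 0 := by
      simp only [sub_ne_zero]
      exact_mod_cast hjk
    have hle : (M : ℤ) ≤ |(j : ℤ) - (k : ℤ)| :=
      Int.le_of_dvd (abs_pos.mpr hne) hdvd2
    have h0 := horth j k hle
    have h1 : P j (P k f) = 0 := by
      have := DFunLike.congr_fun h0 f
      simpa using this
    rw [hsym j f (P k f), h1, inner_zero_right]
  have hupper : ∀ N : ℕ, ∑ j ∈ Finset.range N, ‖P j f‖ ^ 2 ≤ (M : ℝ) * ‖f‖ ^ 2 := by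
    intro N
    have hpart : ∑ r ∈ Finset.range M, ∑ j ∈ (Finset.range N).filter (fun j => j % M = r),
        ‖P j f‖ ^ 2 = ∑ j ∈ Finset.range N, ‖P j f‖ ^ 2 :=
      Finset.sum_fiberwise_of_maps_to (fun j _ => Finset.mem_range.mpr (Nat.mod_lt j hM)) _
    rw [← hpart]
    have hblock : ∀ r : ℕ, ∑ j ∈ (Finset.range N).filter (fun j => j % M = r),
        ‖P j f‖ ^ 2 ≤ ‖f‖ ^ 2 := by
      intro r
      set S := (Finset.range N).filter (fun j => j % M = r) with hS
      set s := ∑ j ∈ S, P j f with hs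
      have horthS : ∀ j ∈ S, ∀ k ∈ S, j ≠ k → ⟪P j f, P k f⟫ = 0 := by
        intro j hj k hk hjk
        rw [hS, Finset.mem_filter] at hj hk
        exact horthf j k hjk (hj.2.trans hk.2.symm)
      have hnormsq : ⟪s, s⟫ = ∑ j ∈ S, ‖P j f‖ ^ 2 := by
        rw [hs, sum_inner]
        refine Finset.sum_congr rfl (fun j hj => ?_)
        rw [inner_sum]
        rw [Finset.sum_eq_single j]
        · exact real_inner_self_eq_norm_sq _
        · intro k hk hkj
          exact horthS j hj k hk (Ne.symm hkj)
        · intro hj'; exact absurd hj hj'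
      have hinnerf : ⟪s, f⟫ = ∑ j ∈ S, ‖P j f‖ ^ 2 := by
        rw [hs, sum_inner]
        refine Finset.sum_congr rfl (fun j hj => ?_)
        rw [real_inner_comm]
        exact (hPnormsq j f).symm
      have hcs : ⟪s, f⟫ ≤ ‖s‖ * ‖f‖ := real_inner_le_norm s f
      have hss : ⟪s, s⟫ = ‖s‖ ^ 2 := real_inner_self_eq_norm_sq s
      nlinarith [norm_nonneg s, norm_nonneg f, hnormsq, hinnerf]
    calc ∑ r ∈ Finset.range M, ∑ j ∈ (Finset.range N).filter (fun j => j % M = r), ‖P j f‖ ^ 2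
        ≤ ∑ _r ∈ Finset.range M, ‖f‖ ^ 2 := Finset.sum_le_sum (fun r _ => hblock r)
      _ = (M : ℝ) * ‖f‖ ^ 2 := by
          rw [Finset.sum_const, Finset.card_range, nsmul_eq_mul]
  have hasumm : Summable (fun j => ‖P j f‖ ^ 2) :=
    summable_of_sum_range_le (fun j => sq_nonneg _) hupper
  have hAle : ∑' j, ‖P j f‖ ^ 2 ≤ (M : ℝ) * ‖f‖ ^ 2 :=
    Summable.tsum_le_of_sum_range_le hasumm hupper
  -- fusion frame lower bound
  have hlow : ‖f‖ ^ 2 ≤ ∑' j, ‖P j f‖ ^ 2 := by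
    have hcomm' : ∀ j n (y : H), P j (P n y) = P n (P j y) := by
      intro j n y
      have := DFunLike.congr_fun (hcomm j n) y
      simpa using this
    -- the product projections
    set Q : ℕ → H →L[ℝ] H :=
      fun n => Nat.rec (ContinuousLinearMap.id ℝ H) (fun n Qn => Qn - (P n) ∘L Qn) n with hQ
    have hQ0 : ∀ x : H, Q 0 x = x := fun x => rfl
    have hQs : ∀ n (x : H), Q (n + 1) x = Q n x - P n (Q n x) := fun n x => rfl
    have hQcomm : ∀ n j (x : H), P j (Q n x) = Q n (P j x) := by
      intro n
      induction n with
      | zero => intro j x; rfl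
      | succ n ih =>
        intro j x
        rw [hQs, map_sub, ih j x, hcomm' j n (Q n x), ih j x, hQs]
    have hstep : ∀ j (y : H), ‖y - P j y‖ ^ 2 = ‖y‖ ^ 2 - ‖P j y‖ ^ 2 := by
      intro j y
      have h1 := norm_sub_sq_real y (P j y)
      have h2 := hPnormsq j y
      linarith
    have hQcontr : ∀ n (x : H), ‖Q n x‖ ≤ ‖x‖ := by
      intro n
      induction n with
      | zero => intro x; rw [hQ0]
      | succ n ih =>
        intro x
        rw [hQs]
        have h1 := hstep n (Q n x)
        have h2 := ih x
        have h3 : ‖Q n x - P n (Q n x)‖ ^ 2 ≤ ‖x‖ ^ 2 := by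
          nlinarith [sq_nonneg ‖P n (Q n x)‖, norm_nonneg (Q n x), norm_nonneg x]
        exact le_of_pow_le_pow_left₀ two_ne_zero (norm_nonneg x) h3
    have hQzero : ∀ n j, j < n → ∀ x : H, P j (Q n x) = 0 := by
      intro n
      induction n with
      | zero => intro j hj; omega
      | succ n ih =>
        intro j hj x
        rw [hQs, map_sub]
        rcases Nat.lt_succ_iff_lt_or_eq.mp hj with h | h
        · rw [ih j h x, hcomm' j n (Q n x), ih j h x, map_zero, sub_zero]
        · subst h
          rw [happ, sub_self]
    have hQidem : ∀ n (x : H), Q n (Q n x) = Q n x := by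
      intro n
      induction n with
      | zero => intro x; rfl
      | succ n ih =>
        intro x
        have e2 : Q (n + 1) (Q n x) = Q n x - P n (Q n x) := by
          rw [hQs n (Q n x), ih]
        have e3 : Q (n + 1) (P n (Q n x)) = 0 := by
          rw [hQs n (P n (Q n x)), ← hQcomm n n (Q n x), ih, happ, sub_self]
        rw [hQs n x, map_sub, e2, e3, sub_zero]
    have hQQ : ∀ m n, m ≤ n → ∀ x : H, Q n (Q m x) = Q n x := by
      intro m n hmn
      induction n, hmn using Nat.le_induction with
      | base => exact hQidem m
      | succ n hmn ih =>
        intro x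
        rw [hQs, hQs, ih]
    have hQsym : ∀ n (x y : H), ⟪Q n x, y⟫ = ⟪x, Q n y⟫ := by
      intro n
      induction n with
      | zero => intro x y; rfl
      | succ n ih =>
        intro x y
        rw [hQs, hQs, inner_sub_left, inner_sub_right, ih, hsym n (Q n x) y, ih,
          hQcomm n n y]
    have hinner_mn : ∀ m n, m ≤ n → ⟪Q m f, Q n f⟫ = ‖Q n f‖ ^ 2 := by
      intro m n hmn
      set y := Q m f with hy
      have h1 : Q n y = Q n f := hQQ m n hmn f
      calc ⟪y, Q n f⟫ = ⟪y, Q n y⟫ := by rw [h1]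
        _ = ⟪Q n y, y⟫ := real_inner_comm _ _
        _ = ⟪Q n (Q n y), y⟫ := by rw [hQidem]
        _ = ⟪Q n y, Q n y⟫ := hQsym n (Q n y) y
        _ = ‖Q n y‖ ^ 2 := real_inner_self_eq_norm_sq _
        _ = ‖Q n f‖ ^ 2 := by rw [h1]
    have hdist : ∀ m n, m ≤ n → ‖Q n f - Q m f‖ ^ 2 = ‖Q m f‖ ^ 2 - ‖Q n f‖ ^ 2 := by
      intro m n hmn
      have h1 := norm_sub_sq_real (Q n f) (Q m f)
      have h2 : ⟪Q n f, Q m f⟫ = ‖Q n f‖ ^ 2 := by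
        rw [real_inner_comm]; exact hinner_mn m n hmn
      linarith
    set b : ℕ → ℝ := fun n => ‖Q n f‖ ^ 2 with hb
    have hPyth : ∀ n, b n = b (n + 1) + ‖P n (Q n f)‖ ^ 2 := by
      intro n
      have h1 := hstep n (Q n f)
      rw [hb]
      simp only [hQs]
      linarith
    have hbanti : Antitone b := by
      apply antitone_nat_of_succ_le
      intro n
      have := hPyth n
      nlinarith [sq_nonneg ‖P n (Q n f)‖]
    have hbbdd : BddBelow (Set.range b) := by
      refine ⟨0, fun x hx => ?_⟩
      obtain ⟨n, rfl⟩ := hx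
      exact sq_nonneg _
    have hbtend : Filter.Tendsto b Filter.atTop (nhds (⨅ n, b n)) :=
      tendsto_atTop_ciInf hbanti hbbdd
    have hbcauchy : CauchySeq b := hbtend.cauchySeq
    have hqcauchy : CauchySeq (fun n => Q n f) := by
      rw [Metric.cauchySeq_iff']
      intro ε hε
      rw [Metric.cauchySeq_iff'] at hbcauchy
      obtain ⟨N, hN⟩ := hbcauchy (ε ^ 2) (by positivity)
      refine ⟨N, fun n hn => ?_⟩
      have h1 : ‖Q n f - Q N f‖ ^ 2 = b N - b n := hdist N n hn
      have h2 : dist (b n) (b N) < ε ^ 2 := hN n hn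
      rw [Real.dist_eq] at h2
      have h3 : b N - b n ≤ |b n - b N| := by
        rw [abs_sub_comm]
        exact le_abs_self _
      have h4 : ‖Q n f - Q N f‖ ^ 2 < ε ^ 2 := by linarith
      rw [dist_eq_norm]
      exact lt_of_pow_lt_pow_left₀ 2 (le_of_lt hε) h4
    obtain ⟨L, hL⟩ := cauchySeq_tendsto_of_complete hqcauchy
    have hPL : ∀ j, P j L = 0 := by
      intro j
      have h1 : Filter.Tendsto (fun n => P j (Q n f)) Filter.atTop (nhds (P j L)) :=
        (((P j).continuous.tendsto L).comp hL)
      have h2 : Filter.Tendsto (fun n => P j (Q n f)) Filter.atTop (nhds 0) := by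
        apply Filter.Tendsto.congr' _ tendsto_const_nhds
        filter_upwards [Filter.eventually_atTop.mpr ⟨j + 1, fun n hn => hn⟩] with n hn
        exact (hQzero n j hn f).symm
      exact tendsto_nhds_unique h1 h2
    have hL0 : L = 0 := hcomplete L hPL
    have hb0 : Filter.Tendsto b Filter.atTop (nhds 0) := by
      have h1 : Filter.Tendsto (fun n => ‖Q n f‖ ^ 2) Filter.atTop (nhds (‖L‖ ^ 2)) :=
        (hL.norm).pow 2
      rw [hL0] at h1
      simpa using h1
    have hkey : ∀ N, ‖f‖ ^ 2 ≤ b N + ∑' j, ‖P j f‖ ^ 2 := by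
      intro N
      have hTel : ∀ N, ‖f‖ ^ 2 = b N + ∑ n ∈ Finset.range N, ‖P n (Q n f)‖ ^ 2 := by
        intro N
        induction N with
        | zero => simp [hb, hQ0]
        | succ N ih =>
          rw [Finset.sum_range_succ, ih]
          have := hPyth N
          linarith
      have h1 : ∑ n ∈ Finset.range N, ‖P n (Q n f)‖ ^ 2 ≤ ∑ n ∈ Finset.range N, ‖P n f‖ ^ 2 := by
        refine Finset.sum_le_sum (fun n _ => ?_)
        have h2 : ‖P n (Q n f)‖ ≤ ‖P n f‖ := by
          rw [hQcomm n n f]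
          exact hQcontr n (P n f)
        exact pow_le_pow_left₀ (norm_nonneg _) h2 2
      have h3 : ∑ n ∈ Finset.range N, ‖P n f‖ ^ 2 ≤ ∑' j, ‖P j f‖ ^ 2 :=
        Summable.sum_le_tsum (Finset.range N) (fun i _ => sq_nonneg _) hasumm
      have := hTel N
      linarith
    have hfinal : Filter.Tendsto (fun N => b N + ∑' j, ‖P j f‖ ^ 2) Filter.atTop
        (nhds (0 + ∑' j, ‖P j f‖ ^ 2)) := hb0.add tendsto_const_nhds
    have := ge_of_tendsto' hfinal hkey
    linarith
  -- combine
  have hSle : ∀ j, ∑' k, c j k ≤ β * ‖P j f‖ ^ 2 := fun j => (hlocal' j).2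
  have hSge : ∀ j, α * ‖P j f‖ ^ 2 ≤ ∑' k, c j k := fun j => (hlocal' j).1
  have hSnonneg : ∀ j, 0 ≤ ∑' k, c j k := fun j => tsum_nonneg (hcnonneg j)
  have hSsumm : Summable (fun j => ∑' k, c j k) := by
    apply Summable.of_nonneg_of_le hSnonneg hSle
    exact hasumm.mul_left β
  have hcsumm : Summable (fun p : ℕ × K => c p.1 p.2) := by
    rw [summable_prod_of_nonneg (fun p => hcnonneg p.1 p.2)]
    exact ⟨hks, hSsumm⟩
  have hrw : ∀ p : ℕ × K, ⟪f, g p.1 p.2⟫ ^ 2 = c p.1 p.2 := by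
    intro p; rw [heq]
  have htsum : ∑' p : ℕ × K, ⟪f, g p.1 p.2⟫ ^ 2 = ∑' j, ∑' k, c j k := by
    rw [tsum_congr hrw]
    exact Summable.tsum_prod' hcsumm hks
  rw [htsum]
  constructor
  · calc α * 1 * ‖f‖ ^ 2 = α * ‖f‖ ^ 2 := by ring
      _ ≤ α * ∑' j, ‖P j f‖ ^ 2 := by nlinarith
      _ = ∑' j, α * ‖P j f‖ ^ 2 := by rw [tsum_mul_left]
      _ ≤ ∑' j, ∑' k, c j k := Summable.tsum_le_tsum hSge (hasumm.mul_left α) hSsumm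
  · calc ∑' j, ∑' k, c j k ≤ ∑' j, β * ‖P j f‖ ^ 2 :=
        Summable.tsum_le_tsum hSle hSsumm (hasumm.mul_left β)
      _ = β * ∑' j, ‖P j f‖ ^ 2 := by rw [← tsum_mul_left]
      _ ≤ β * ((M : ℝ) * ‖f‖ ^ 2) := by nlinarith
      _ = β * (M : ℝ) * ‖f‖ ^ 2 := by ring
end
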